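/- arXiv:1508.00956 — 7 statements merged into one kernel-verified Lean document; each statement's English description precedes it below -/
import Mathlib

section
/- For every t ≥ 0 and every word σ with |σ| ≤ t, the geodesic distance from σ to the empty word in G_t equals ω(σ): d_t(σ,∅) = ω(σ). -/
open Filter Finset

/-- A letter of the alphabet `{1,2,3}`. -/
abbrev Letter := Fin 3

/-- A word: a finite (possibly empty) sequence of letters. -/
abbrev Word := List Letter

/-- Adjacency of two words: `σ ≠ τ`, and writing `σ = β ++ σ'`, `τ = β ++ τ'` with `β`
the longest common prefix, either one of `σ'`, `τ'` is empty and the other uses at most two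
distinct letters, or `σ' = i j^k` and `τ' = j i^{k'}` for distinct letters `i ≠ j`. -/
def WordAdj (σ τ : Word) : Prop :=
  σ ≠ τ ∧ ∃ β σ' τ' : Word,
    σ = β ++ σ' ∧ τ = β ++ τ' ∧
    ((σ' = [] ∧ τ'.toFinset.card ≤ 2) ∨
     (τ' = [] ∧ σ'.toFinset.card ≤ 2) ∨
     (∃ (i j : Letter) (k k' : ℕ), i ≠ j ∧
        σ' = i :: List.replicate k j ∧ τ' = j :: List.replicate k' i))

/-- The graph `G_t`: vertices are the words of length at most `t` (all other words are
isolated), with adjacency `WordAdj`. -/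
def Gt (t : ℕ) : SimpleGraph Word where
  Adj σ τ := σ.length ≤ t ∧ τ.length ≤ t ∧ WordAdj σ τ
  symm := by
    constructor
    rintro σ τ ⟨h1, h2, hne, β, σ', τ', e1, e2, h3⟩
    refine ⟨h2, h1, hne.symm, β, τ', σ', e2, e1, ?_⟩
    rcases h3 with h | h | ⟨i, j, k, k', hij, hs, ht⟩
    · exact Or.inr (Or.inl h)
    · exact Or.inl h
    · exact Or.inr (Or.inr ⟨j, i, k', k, hij.symm, ht, hs⟩)
  loopless := ⟨fun σ h => h.2.2.1 rfl⟩

/-- `dW t σ τ` is the geodesic distance `d_t(σ,τ)` in the graph `G_t`. -/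
noncomputable def dW (t : ℕ) (σ τ : Word) : ℕ := (Gt t).dist σ τ

/-- Length of the longest suffix of `σ` using at most two distinct letters. -/
def suffLen (σ : Word) : ℕ :=
  Nat.findGreatest (fun m => (σ.drop (σ.length - m)).toFinset.card ≤ 2) σ.length

/-- `fW σ = τ₂` where `σ = τ₂τ₁` and `τ₁` is the longest suffix of `σ` using at most two
distinct letters; `fW [] = []`. -/
def fW (σ : Word) : Word := σ.take (σ.length - suffLen σ)

/-- `ω(σ)`: the least `n ≥ 0` with `f^[n] σ = ∅`. -/
noncomputable def omegaW (σ : Word) : ℕ := sInf {n : ℕ | fW^[n] σ = []}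

/-- `L(σ) = d_{|σ|}(σ, ∅) - 1` for nonempty `σ`, and `L(∅) = 0`. -/
noncomputable def Lw (σ : Word) : ℕ := if σ = [] then 0 else dW σ.length σ [] - 1

/-- `ᾱ_m`: the average of `L` over the `3^m` words of length `m`. -/
noncomputable def alphaBar (m : ℕ) : ℝ :=
  (∑ v : Fin m → Letter, (Lw (List.ofFn v) : ℝ)) / 3 ^ m

/-- `α* = sup_{m ≥ 1} ᾱ_m / m`. -/
noncomputable def alphaStar : ℝ :=
  sSup {x : ℝ | ∃ m : ℕ, 1 ≤ m ∧ x = alphaBar m / m}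

/-- `#V_t = (3^{t+1} - 1)/2`, the number of vertices of `G_t`, as a real number. -/
noncomputable def Nv (t : ℕ) : ℝ := ((3 : ℝ) ^ (t + 1) - 1) / 2

/-- The sum of `d_t(σ,τ)` over all ordered pairs of words `σ, τ ∈ V_t`
(twice the sum over unordered pairs of distinct words). -/
noncomputable def pairSum (t : ℕ) : ℝ :=
  ∑ k ∈ range (t + 1), ∑ l ∈ range (t + 1),
    ∑ v : Fin k → Letter, ∑ w : Fin l → Letter,
      (dW t (List.ofFn v) (List.ofFn w) : ℝ)

/-- The average path length `D̄(t)` of `G_t`. -/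
noncomputable def Dbar (t : ℕ) : ℝ := pairSum t / (Nv t * (Nv t - 1))

/-- `κ_t = (Σ_{σ ∈ V_t} L(σ)) / #V_t`. -/
noncomputable def kappa (t : ℕ) : ℝ :=
  (∑ k ∈ range (t + 1), ∑ v : Fin k → Letter, (Lw (List.ofFn v) : ℝ)) / Nv t

/-- `π_t`: the sum of `d_t(σ,τ)` over unordered pairs of distinct `σ, τ ∈ V_t`. -/
noncomputable def piT (t : ℕ) : ℝ := pairSum t / 2

/-- `μ_t`: the sum of `d_t(σ,τ)` over unordered pairs of distinct `σ, τ ∈ V_t`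
having the same first letter. -/
noncomputable def muT (t : ℕ) : ℝ :=
  (∑ i : Letter, ∑ k ∈ range t, ∑ l ∈ range t,
    ∑ v : Fin k → Letter, ∑ w : Fin l → Letter,
      (dW t (i :: List.ofFn v) (i :: List.ofFn w) : ℝ)) / 2

/-- `λ_t = Σ_{σ ∈ V_t, σ ≠ ∅} d_t(σ, ∅)`. -/
noncomputable def lambdaT (t : ℕ) : ℝ :=
  ∑ k ∈ Finset.Icc 1 t, ∑ v : Fin k → Letter, (dW t (List.ofFn v) [] : ℝ)

/-- `ν_t = Σ_{i<j} Σ_{|σ'|,|τ'| ≤ t-1} d_t(iσ', jτ')`. -/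
noncomputable def nuT (t : ℕ) : ℝ :=
  ∑ i : Letter, ∑ j : Letter,
    if i < j then
      ∑ k ∈ range t, ∑ l ∈ range t,
        ∑ v : Fin k → Letter, ∑ w : Fin l → Letter,
          (dW t (i :: List.ofFn v) (j :: List.ofFn w) : ℝ)
    else 0

/-- `IsNormalDecomp σ τs`: `τs = [τ₁, …, τ_l]` (with `l ≥ 1`) is a normal decomposition
of `σ`: `σ = τ₁⋯τ_l`; `#τ₁ ≤ 2`, `|τ₁| ≥ 1`; `#τ_i = 2`, `|τ_i| ≥ 2` for `i ≥ 2`; and for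
`i < l` the last letter of `τ_i` is the unique letter of the alphabet not appearing
in `τ_{i+1}`. -/
def IsNormalDecomp (σ : Word) (τs : List Word) : Prop :=
  σ = τs.flatten ∧ τs ≠ [] ∧
  (∀ i : Fin τs.length,
    (i.1 = 0 → 1 ≤ (τs.get i).length ∧ (τs.get i).toFinset.card ≤ 2) ∧
    (1 ≤ i.1 → 2 ≤ (τs.get i).length ∧ (τs.get i).toFinset.card = 2)) ∧
  (∀ i : ℕ, ∀ h : i + 1 < τs.length,
    ∃ c : Letter, (τs.get ⟨i, Nat.lt_of_succ_lt h⟩).getLast? = some c ∧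
      c ∉ (τs.get ⟨i + 1, h⟩).toFinset ∧
      ∀ c' : Letter, c' ∉ (τs.get ⟨i + 1, h⟩).toFinset → c' = c)

/-- `W_{k₁⋯k_l}`: the number of words of length `k₁ + ⋯ + k_l` admitting a normal
decomposition into blocks of lengths `k₁, …, k_l`. -/
noncomputable def Wcount (ks : List ℕ) : ℕ :=
  Nat.card {σ : Word // ∃ τs : List Word, IsNormalDecomp σ τs ∧ τs.map List.length = ks}

/-- `Ē(t) = 3^{-t} Σ_{q ≥ 1} Σ_{k₁ ≥ 1, k₂,…,k_q ≥ 2, k₁+⋯+k_q = t} (q-1)·W_{k₁⋯k_q}`. -/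
noncomputable def Ebar (t : ℕ) : ℝ :=
  ((∑ c : Composition t,
      if ∀ i ∈ c.blocks.tail, 2 ≤ i then
        (c.blocks.length - 1) * Wcount c.blocks
      else 0 : ℕ) : ℝ) / 3 ^ t

lemma suffLen_le (σ : Word) : suffLen σ ≤ σ.length := Nat.findGreatest_le _

lemma suffLen_pos {σ : Word} (h : σ ≠ []) : 1 ≤ suffLen σ := by
  apply Nat.le_findGreatest (by exact List.length_pos_iff.2 h)
  calc (σ.drop (σ.length - 1)).toFinset.card ≤ (σ.drop (σ.length - 1)).length :=
        List.toFinset_card_le _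
    _ ≤ 2 := by
        rw [List.length_drop]
        omega

lemma suffix_card_le (σ : Word) : (σ.drop (σ.length - suffLen σ)).toFinset.card ≤ 2 := by
  exact Nat.findGreatest_spec (P := fun m => (σ.drop (σ.length - m)).toFinset.card ≤ 2)
    (Nat.zero_le _) (by simp)

lemma fW_length (σ : Word) : (fW σ).length = σ.length - suffLen σ := by
  simp [fW]

lemma fW_length_lt {σ : Word} (h : σ ≠ []) : (fW σ).length < σ.length := by
  rw [fW_length]
  have := suffLen_pos h
  have : 1 ≤ σ.length := by exact List.length_pos_iff.2 h
  omega

lemma fW_append (σ : Word) : fW σ ++ σ.drop (σ.length - suffLen σ) = σ :=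
  List.take_append_drop _ _


lemma exists_iter_nil (σ : Word) : ∃ n, fW^[n] σ = [] := by
  suffices H : ∀ n (σ : Word), σ.length ≤ n → ∃ m, fW^[m] σ = [] from H σ.length σ le_rfl
  intro n
  induction n with
  | zero =>
    intro σ hσ
    exact ⟨0, List.length_eq_zero_iff.1 (Nat.le_zero.1 hσ)⟩
  | succ n ih =>
    intro σ hσ
    rcases eq_or_ne σ [] with rfl | hne
    · exact ⟨0, rfl⟩
    · obtain ⟨m, hm⟩ := ih (fW σ) (by have := fW_length_lt hne; omega)
      exact ⟨m + 1, by rwa [Function.iterate_succ_apply]⟩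

lemma omegaW_nil : omegaW [] = 0 := Nat.sInf_eq_zero.2 (Or.inl rfl)

lemma omegaW_eq {σ : Word} (h : σ ≠ []) : omegaW σ = omegaW (fW σ) + 1 := by
  have hne : {n : ℕ | fW^[n] σ = []}.Nonempty := exists_iter_nil σ
  have hne' : {n : ℕ | fW^[n] (fW σ) = []}.Nonempty := exists_iter_nil (fW σ)
  apply le_antisymm
  · apply Nat.sInf_le
    show fW^[omegaW (fW σ) + 1] σ = []
    rw [Function.iterate_succ_apply]
    exact Nat.sInf_mem hne'
  · have hmem : fW^[omegaW σ] σ = [] := Nat.sInf_mem hne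
    rcases Nat.eq_zero_or_pos (omegaW σ) with h0 | hp
    · rw [h0] at hmem; exact absurd hmem h
    · obtain ⟨k, hk⟩ := Nat.exists_eq_add_of_lt hp
      rw [hk] at hmem ⊢
      rw [zero_add] at hk hmem ⊢
      rw [Function.iterate_succ_apply] at hmem
      have : omegaW (fW σ) ≤ k := Nat.sInf_le hmem
      omega

/-- `Pdec n σ`: σ is a concatenation of `n` blocks each using ≤ 2 letters. -/
def Pdec (n : ℕ) (σ : Word) : Prop :=
  ∃ L : List Word, L.length = n ∧ (∀ ρ ∈ L, ρ.toFinset.card ≤ 2) ∧ σ = L.flatten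

lemma flatten_replicate_nil (n : ℕ) : (List.replicate n ([] : Word)).flatten = [] := by
  induction n with
  | zero => rfl
  | succ n ih => simp [List.replicate_succ, ih]

lemma prefix_cases {π ρ rest : Word} (h : π <+: ρ ++ rest) :
    π <+: ρ ∨ ∃ π', π = ρ ++ π' ∧ π' <+: rest := by
  rcases le_or_gt π.length ρ.length with hl | hl
  · left
    exact List.prefix_of_prefix_length_le h (ρ.prefix_append rest) hl
  · right
    have hρπ : ρ <+: π := List.prefix_of_prefix_length_le (ρ.prefix_append rest) h hl.le
    obtain ⟨π', rfl⟩ := hρπ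
    exact ⟨π', rfl, (List.prefix_append_right_inj ρ).1 h⟩

lemma Pdec_prefix {n : ℕ} {σ π : Word} (h : Pdec n σ) (hp : π <+: σ) : Pdec n π := by
  obtain ⟨L, hlen, hcard, rfl⟩ := h
  subst hlen
  induction L generalizing π with
  | nil =>
    simp only [List.flatten_nil, List.prefix_nil] at hp
    exact ⟨[], by simp [hp]⟩
  | cons ρ L ih =>
    rw [List.flatten_cons] at hp
    rcases prefix_cases hp with hπρ | ⟨π', rfl, hπ'⟩
    · refine ⟨π :: List.replicate L.length [], by simp, ?_, by simp [flatten_replicate_nil]⟩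
      intro x hx
      rcases List.mem_cons.1 hx with rfl | hx
      · calc x.toFinset.card ≤ ρ.toFinset.card :=
            Finset.card_le_card (fun a ha => by
              simp only [List.mem_toFinset] at ha ⊢
              exact hπρ.subset ha)
          _ ≤ 2 := hcard ρ (by simp)
      · rw [List.eq_of_mem_replicate hx]; simp
    · obtain ⟨L', hL'len, hL'card, hflat⟩ :=
        ih (fun x hx => hcard x (List.mem_cons_of_mem _ hx)) hπ'
      exact ⟨ρ :: L', by simp [hL'len], fun x hx => by
        rcases List.mem_cons.1 hx with rfl | hx
        · exact hcard x (by simp)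
        · exact hL'card x hx, by simp [hflat]⟩

lemma Pdec_omegaW (σ : Word) : Pdec (omegaW σ) σ := by
  suffices H : ∀ n (σ : Word), σ.length ≤ n → Pdec (omegaW σ) σ from H σ.length σ le_rfl
  intro n
  induction n with
  | zero =>
    intro σ hσ
    rw [List.length_eq_zero_iff.1 (Nat.le_zero.1 hσ)]
    exact ⟨[], by simp [omegaW_nil]⟩
  | succ n ih =>
    intro σ hσ
    rcases eq_or_ne σ [] with rfl | hne
    · exact ⟨[], by simp [omegaW_nil]⟩
    · obtain ⟨L, hlen, hcard, hflat⟩ := ih (fW σ) (by have := fW_length_lt hne; omega)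
      rw [omegaW_eq hne]
      refine ⟨L ++ [σ.drop (σ.length - suffLen σ)], by simp [hlen], ?_, ?_⟩
      · intro x hx
        rcases List.mem_append.1 hx with hx | hx
        · exact hcard x hx
        · simp only [List.mem_singleton] at hx
          subst hx; exact suffix_card_le σ
      · rw [List.flatten_append, ← hflat]
        simp [fW_append]

lemma omegaW_le_of_Pdec {n : ℕ} {σ : Word} (h : Pdec n σ) : omegaW σ ≤ n := by
  induction n generalizing σ with
  | zero =>
    obtain ⟨L, hlen, -, rfl⟩ := h
    rw [List.length_eq_zero_iff] at hlen
    simp [hlen, omegaW_nil]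
  | succ n ih =>
    rcases eq_or_ne σ [] with rfl | hne
    · simp [omegaW_nil]
    obtain ⟨L, hlen, hcard, rfl⟩ := h
    rcases L.eq_nil_or_concat with rfl | ⟨M, ρ, rfl⟩
    · simp at hlen
    have hflat : (M.concat ρ).flatten = M.flatten ++ ρ := by simp
    rw [hflat] at hne ⊢
    have hMlen : M.length = n := by simpa using hlen
    have hcard' : ∀ x ∈ M, x.toFinset.card ≤ 2 := fun x hx => hcard x (by simp [hx])
    have hcρ : ρ.toFinset.card ≤ 2 := hcard ρ (by simp)
    set τ : Word := M.flatten ++ ρ with hτ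
    have hρlen : ρ.length ≤ τ.length := by simp [hτ]
    have hτlen : τ.length = M.flatten.length + ρ.length := by simp [hτ]
    have hdrop : τ.drop (τ.length - ρ.length) = ρ := by
      have h1 : τ.length - ρ.length = M.flatten.length := by omega
      rw [h1, hτ, List.drop_left]
    have hsuff : ρ.length ≤ suffLen τ := by
      apply Nat.le_findGreatest hρlen
      rw [hdrop]
      exact hcρ
    have hfWpre : fW τ <+: M.flatten := by
      have hkey : τ.length - suffLen τ ≤ M.flatten.length := by omega
      rw [fW, hτ, List.take_append_of_le_length (by rw [← hτ]; exact hkey)]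
      exact List.take_prefix _ _
    have hP : Pdec n (fW τ) := Pdec_prefix ⟨M, hMlen, hcard', rfl⟩ hfWpre
    rw [omegaW_eq hne]
    exact Nat.succ_le_succ (ih hP)


lemma card_cons_replicate_le (i j : Letter) (k : ℕ) :
    ((i :: List.replicate k j : Word)).toFinset.card ≤ 2 := by
  have hsub : ((i :: List.replicate k j : Word)).toFinset ⊆ {i, j} := by
    intro x hx
    simp only [List.mem_toFinset, List.mem_cons, List.mem_replicate] at hx
    rcases hx with rfl | ⟨-, rfl⟩ <;> simp
  calc ((i :: List.replicate k j : Word)).toFinset.card ≤ ({i, j} : Finset Letter).card :=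
        Finset.card_le_card hsub
    _ ≤ 2 := (Finset.card_insert_le _ _).trans (by simp)

lemma Pdec_append_block {n : ℕ} {β ρ : Word} (h : Pdec n β) (hρ : ρ.toFinset.card ≤ 2) :
    Pdec (n + 1) (β ++ ρ) := by
  obtain ⟨L, hlen, hcard, rfl⟩ := h
  refine ⟨L ++ [ρ], by simp [hlen], ?_, by simp⟩
  intro x hx
  rcases List.mem_append.1 hx with hx | hx
  · exact hcard x hx
  · simp only [List.mem_singleton] at hx; subst hx; exact hρ

lemma omegaW_le_prefix {β τ : Word} (h : β <+: τ) : omegaW β ≤ omegaW τ :=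
  omegaW_le_of_Pdec (Pdec_prefix (Pdec_omegaW τ) h)

lemma omegaW_le_adj {σ τ : Word} (h : WordAdj σ τ) : omegaW σ ≤ omegaW τ + 1 := by
  obtain ⟨-, β, σ', τ', rfl, rfl, hcase⟩ := h
  rcases hcase with ⟨rfl, -⟩ | ⟨rfl, hc⟩ | ⟨i, j, k, k', -, rfl, rfl⟩
  · rw [List.append_nil]
    exact (omegaW_le_prefix (β.prefix_append τ')).trans (Nat.le_succ _)
  · rw [List.append_nil]
    exact omegaW_le_of_Pdec (Pdec_append_block (Pdec_omegaW β) hc)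
  · calc omegaW (β ++ i :: List.replicate k j)
        ≤ omegaW β + 1 :=
          omegaW_le_of_Pdec (Pdec_append_block (Pdec_omegaW β) (card_cons_replicate_le i j k))
      _ ≤ omegaW (β ++ j :: List.replicate k' i) + 1 :=
          Nat.succ_le_succ (omegaW_le_prefix (β.prefix_append _))

lemma adj_fW {t : ℕ} {σ : Word} (hne : σ ≠ []) (h : σ.length ≤ t) : (Gt t).Adj σ (fW σ) := by
  show σ.length ≤ t ∧ (fW σ).length ≤ t ∧ WordAdj σ (fW σ)
  refine ⟨h, (fW_length_lt hne).le.trans h, ?_, fW σ, σ.drop (σ.length - suffLen σ), [],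
    (fW_append σ).symm, (List.append_nil _).symm,
    Or.inr (Or.inl ⟨rfl, suffix_card_le σ⟩)⟩
  intro hσ
  have := fW_length_lt hne
  rw [← hσ] at this
  omega

lemma exists_walk_omega (t : ℕ) (σ : Word) (h : σ.length ≤ t) :
    ∃ p : (Gt t).Walk σ [], p.length = omegaW σ := by
  suffices H : ∀ n (σ : Word), σ.length ≤ n → σ.length ≤ t →
      ∃ p : (Gt t).Walk σ [], p.length = omegaW σ from H σ.length σ le_rfl h
  intro n
  induction n with
  | zero =>
    intro σ hσ _
    rw [List.length_eq_zero_iff.1 (Nat.le_zero.1 hσ)]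
    exact ⟨SimpleGraph.Walk.nil, by simp [omegaW_nil]⟩
  | succ n ih =>
    intro σ hσ ht
    rcases eq_or_ne σ [] with rfl | hne
    · exact ⟨SimpleGraph.Walk.nil, by simp [omegaW_nil]⟩
    · have hlt := fW_length_lt hne
      obtain ⟨p, hp⟩ := ih (fW σ) (by omega) (by omega)
      exact ⟨SimpleGraph.Walk.cons (adj_fW hne ht) p,
        by rw [SimpleGraph.Walk.length_cons, hp, omegaW_eq hne]⟩

lemma omegaW_le_walk_length' {t : ℕ} {σ τ : Word} (p : (Gt t).Walk σ τ) :
    omegaW σ ≤ p.length + omegaW τ := by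
  induction p with
  | nil => simp
  | cons h q ih =>
    rw [SimpleGraph.Walk.length_cons]
    calc omegaW _ ≤ omegaW _ + 1 := omegaW_le_adj (show _ ∧ _ ∧ WordAdj _ _ from h).2.2
      _ ≤ q.length + omegaW _ + 1 := Nat.succ_le_succ ih
      _ = q.length + 1 + omegaW _ := by omega

lemma omegaW_le_walk_length {t : ℕ} {σ : Word} (p : (Gt t).Walk σ []) :
    omegaW σ ≤ p.length := by
  have := omegaW_le_walk_length' p
  rwa [omegaW_nil, Nat.add_zero] at this

/-- For every `t ≥ 0` and every word `σ` with `|σ| ≤ t`, the geodesic distance from `σ`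
to the empty word in `G_t` equals `ω(σ)`. -/
theorem dist_to_empty_eq_omega (t : ℕ) (σ : Word) (h : σ.length ≤ t) :
    dW t σ [] = omegaW σ := by
  obtain ⟨p, hp⟩ := exists_walk_omega t σ h
  rw [dW]
  refine le_antisymm (hp ▸ SimpleGraph.dist_le p) ?_
  obtain ⟨q, hq⟩ := p.reachable.exists_walk_length_eq_dist
  exact hq ▸ omegaW_le_walk_length q
end

section
/- α* = 2/9, i.e. sup_{m≥1} ᾱ_m/m = lim_{m→∞} ᾱ_m/m = 2/9. -/
open Filter Finset

namespace Aux


/-- Number of cuts when scanning a word left-to-right, with current block alphabet `s`. -/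
def cutsW : Finset Letter → Word → ℕ
  | _, [] => 0
  | s, a :: l => if (insert a s).card ≤ 2 then cutsW (insert a s) l else 1 + cutsW {a} l

/-- State (current block alphabet) after scanning. -/
def stW : Finset Letter → Word → Finset Letter
  | s, [] => s
  | s, a :: l => if (insert a s).card ≤ 2 then stW (insert a s) l else stW {a} l

/-- Maximal prefix usable in the current block, and the rest. -/
def take2 : Finset Letter → Word → Word × Word
  | _, [] => ([], [])
  | s, a :: l =>
    if (insert a s).card ≤ 2 then
      (a :: (take2 (insert a s) l).1, (take2 (insert a s) l).2)
    else ([], a :: l)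

/-- `Mw σ` : the minimal number of blocks. -/
def Mw (σ : Word) : ℕ := if σ = [] then 0 else 1 + cutsW ∅ σ

lemma cutsW_nil (s : Finset Letter) : cutsW s [] = 0 := rfl

lemma cutsW_cons (s : Finset Letter) (a : Letter) (l : Word) :
    cutsW s (a :: l) = if (insert a s).card ≤ 2 then cutsW (insert a s) l
      else 1 + cutsW {a} l := rfl

lemma stW_cons (s : Finset Letter) (a : Letter) (l : Word) :
    stW s (a :: l) = if (insert a s).card ≤ 2 then stW (insert a s) l
      else stW {a} l := rfl

lemma cutsW_empty_cons (a : Letter) (l : Word) : cutsW ∅ (a :: l) = cutsW {a} l := by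
  rw [cutsW_cons, if_pos]
  · simp
  · simp

lemma cutsW_append (γ : Word) : ∀ (s : Finset Letter) (μ : Word),
    cutsW s (γ ++ μ) = cutsW s γ + cutsW (stW s γ) μ := by
  induction γ with
  | nil => intro s μ; simp [cutsW_nil, stW]
  | cons a l ih =>
    intro s μ
    by_cases h : (insert a s).card ≤ 2
    · simp only [List.cons_append, cutsW_cons, stW_cons, if_pos h, ih]
    · simp only [List.cons_append, cutsW_cons, stW_cons, if_neg h, ih, add_assoc]

lemma cutsW_eq_zero {T : Finset Letter} (hT : T.card ≤ 2) :
    ∀ (σ : Word) (s : Finset Letter), s ⊆ T → σ.toFinset ⊆ T → cutsW s σ = 0 := by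
  intro σ
  induction σ with
  | nil => intro s _ _; rfl
  | cons a l ih =>
    intro s hs hσ
    have ha : a ∈ T := hσ (by simp)
    have hl : l.toFinset ⊆ T := by
      intro x hx; exact hσ (by simp [List.mem_toFinset] at hx ⊢; exact Or.inr hx)
    have hsub : insert a s ⊆ T := Finset.insert_subset ha hs
    rw [cutsW_cons, if_pos ((Finset.card_le_card hsub).trans hT)]
    exact ih _ hsub hl

lemma cutsW_le_one {T : Finset Letter} (hT : T.card ≤ 2) :
    ∀ (σ : Word), σ.toFinset ⊆ T → ∀ s : Finset Letter, cutsW s σ ≤ 1 := by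
  intro σ
  induction σ with
  | nil => intro _ s; simp [cutsW_nil]
  | cons a l ih =>
    intro hσ s
    have ha : a ∈ T := hσ (by simp)
    have hl : l.toFinset ⊆ T := by
      intro x hx; exact hσ (by simp [List.mem_toFinset] at hx ⊢; exact Or.inr hx)
    rw [cutsW_cons]
    by_cases h : (insert a s).card ≤ 2
    · rw [if_pos h]; exact ih hl _
    · rw [if_neg h, cutsW_eq_zero hT l {a} (Finset.singleton_subset_iff.2 ha) hl]

lemma take2_append (σ : Word) : ∀ s : Finset Letter,
    (take2 s σ).1 ++ (take2 s σ).2 = σ := by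
  induction σ with
  | nil => intro s; rfl
  | cons a l ih =>
    intro s
    by_cases h : (insert a s).card ≤ 2
    · simp only [take2, if_pos h, List.cons_append, ih]
    · simp only [take2, if_neg h, List.nil_append]

lemma take2_card (σ : Word) : ∀ s : Finset Letter, s.card ≤ 2 →
    ((take2 s σ).1.toFinset ∪ s).card ≤ 2 := by
  induction σ with
  | nil => intro s hs; simpa [take2] using hs
  | cons a l ih =>
    intro s hs
    by_cases h : (insert a s).card ≤ 2
    · have := ih (insert a s) h
      simp only [take2, if_pos h, List.toFinset_cons]
      rw [Finset.insert_union, ← Finset.union_insert]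
      exact this
    · simpa [take2, if_neg h] using hs

lemma take2_fst_ne {σ : Word} (h : σ ≠ []) : (take2 ∅ σ).1 ≠ [] := by
  cases σ with
  | nil => exact absurd rfl h
  | cons a l =>
    have : (insert a (∅ : Finset Letter)).card ≤ 2 := by simp
    simp [take2, if_pos this]

lemma cutsW_take2 (σ : Word) : ∀ s : Finset Letter,
    cutsW s σ = if (take2 s σ).2 = [] then 0 else 1 + cutsW ∅ (take2 s σ).2 := by
  induction σ with
  | nil => intro s; rfl
  | cons a l ih =>
    intro s
    by_cases h : (insert a s).card ≤ 2
    · simp only [take2, if_pos h, cutsW_cons, ih]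
    · simp only [take2, if_neg h, cutsW_cons]
      rw [if_neg (by simp), if_pos (by simp : (insert a (∅:Finset Letter)).card ≤ 2)]
      simp


lemma Mw_nil : Mw [] = 0 := rfl

lemma Mw_ne_nil {σ : Word} (h : σ ≠ []) : Mw σ = 1 + cutsW ∅ σ := if_neg h

lemma append_ne_nil_left {β : Word} (ρ : Word) (h : β ≠ []) : β ++ ρ ≠ [] := by
  cases β <;> simp_all

lemma Mw_le_append (β ρ : Word) : Mw β ≤ Mw (β ++ ρ) := by
  rcases eq_or_ne β [] with rfl | hβ
  · simp [Mw_nil]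
  · rw [Mw_ne_nil hβ, Mw_ne_nil (append_ne_nil_left ρ hβ), cutsW_append]
    omega

lemma Mw_append_le (β : Word) {ρ : Word} (h : ρ.toFinset.card ≤ 2) :
    Mw (β ++ ρ) ≤ Mw β + 1 := by
  rcases eq_or_ne β [] with rfl | hβ
  · rcases eq_or_ne ρ [] with rfl | hρ
    · simp [Mw_nil]
    · rw [List.nil_append, Mw_ne_nil hρ,
        cutsW_eq_zero h ρ ∅ (Finset.empty_subset _) subset_rfl, Mw_nil]
  · rw [Mw_ne_nil (append_ne_nil_left ρ hβ), Mw_ne_nil hβ, cutsW_append]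
    have := cutsW_le_one h ρ subset_rfl (stW ∅ β)
    omega

lemma pair_card (i j : Letter) (k : ℕ) : (i :: List.replicate k j).toFinset.card ≤ 2 := by
  have hsub : (i :: List.replicate k j).toFinset ⊆ {i, j} := by
    intro x hx
    simp only [List.toFinset_cons, Finset.mem_insert, List.mem_toFinset,
      List.mem_replicate] at hx
    rcases hx with rfl | ⟨-, rfl⟩ <;> simp
  exact (Finset.card_le_card hsub).trans
    ((Finset.card_insert_le _ _).trans (by simp))

lemma Mw_lip {σ τ : Word} (h : WordAdj σ τ) : Mw σ ≤ Mw τ + 1 := by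
  obtain ⟨hne, β, σ', τ', rfl, rfl, hc⟩ := h
  rcases hc with ⟨rfl, h2⟩ | ⟨rfl, h2⟩ | ⟨i, j, k, k', hij, rfl, rfl⟩
  · rw [List.append_nil]
    exact (Mw_le_append β τ').trans (Nat.le_succ _)
  · rw [List.append_nil]
    exact Mw_append_le β h2
  · exact (Mw_append_le β (pair_card i j k)).trans
      (Nat.add_le_add_right (Mw_le_append β _) 1)

lemma walk_bound {t : ℕ} : ∀ {x y : Word} (w : (Gt t).Walk x y),
    Mw y ≤ Mw x + w.length := by
  intro x y w
  induction w with
  | nil => simp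
  | @cons u v y h p ih =>
    obtain ⟨-, -, hadj⟩ := h.symm
    have h2 := Mw_lip hadj
    rw [SimpleGraph.Walk.length_cons]
    omega

lemma exists_partition : ∀ (n : ℕ) (σ : Word), σ.length ≤ n →
    ∃ l : List Word, l.flatten = σ ∧ (∀ ρ ∈ l, ρ ≠ [] ∧ ρ.toFinset.card ≤ 2) ∧
      l.length = Mw σ := by
  intro n
  induction n with
  | zero =>
    intro σ hσ
    have : σ = [] := List.length_eq_zero_iff.mp (Nat.le_zero.mp hσ)
    subst this
    exact ⟨[], rfl, by simp, rfl⟩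
  | succ n ih =>
    intro σ hσ
    rcases eq_or_ne σ [] with rfl | hne
    · exact ⟨[], rfl, by simp, rfl⟩
    · set p := (take2 ∅ σ).1 with hp
      set r := (take2 ∅ σ).2 with hr
      have hpr : p ++ r = σ := take2_append σ ∅
      have hpne : p ≠ [] := take2_fst_ne hne
      have hp1 : 1 ≤ p.length := by
        cases hq : p
        · exact absurd hq hpne
        · simp [hq]
      have hrlen : r.length ≤ n := by
        have h2 := congrArg List.length hpr
        simp only [List.length_append] at h2
        omega
      obtain ⟨l, hfl, hpieces, hlen⟩ := ih r hrlen
      have hcard : p.toFinset.card ≤ 2 := by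
        have h3 := take2_card σ ∅ (by simp)
        simpa using h3
      refine ⟨p :: l, by simp [hfl, hpr], ?_, ?_⟩
      · intro ρ hρ
        rcases List.mem_cons.mp hρ with rfl | hmem
        · exact ⟨hpne, hcard⟩
        · exact hpieces ρ hmem
      · simp only [List.length_cons, hlen]
        rw [Mw_ne_nil hne, cutsW_take2 σ ∅, ← hr]
        rcases eq_or_ne r [] with hre | hre
        · rw [if_pos hre, hre]
          simp [Mw_nil]
        · rw [if_neg hre, Mw_ne_nil hre]
          omega

lemma exists_walk (t : ℕ) : ∀ l : List Word,
    (∀ ρ ∈ l, ρ ≠ [] ∧ ρ.toFinset.card ≤ 2) → l.flatten.length ≤ t →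
    ∃ w : (Gt t).Walk l.flatten [], w.length = l.length := by
  intro l
  induction l using List.reverseRecOn with
  | nil => exact fun _ _ => ⟨SimpleGraph.Walk.nil, rfl⟩
  | append_singleton l ρ ih =>
    intro hpieces hlen
    have hρ := hpieces ρ (by simp)
    have hfl : (l ++ [ρ]).flatten = l.flatten ++ ρ := by simp
    rw [hfl] at hlen
    have hlen2 : l.flatten.length ≤ t := by
      simp only [List.length_append] at hlen; omega
    obtain ⟨w, hw⟩ := ih (fun ρ' h => hpieces ρ' (by simp [h])) hlen2
    have hne : l.flatten ++ ρ ≠ l.flatten := by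
      intro hcontr
      have h4 := congrArg List.length hcontr
      simp only [List.length_append] at h4
      exact hρ.1 (List.length_eq_zero_iff.mp (by omega))
    have hadj : (Gt t).Adj (l.flatten ++ ρ) l.flatten :=
      ⟨hlen, hlen2, hne, l.flatten, ρ, [], rfl, (List.append_nil _).symm,
        Or.inr (Or.inl ⟨rfl, hρ.2⟩)⟩
    refine ⟨(SimpleGraph.Walk.cons hadj w).copy hfl.symm rfl, ?_⟩
    simp [hw]

lemma dist_eq_Mw (σ : Word) : (Gt σ.length).dist σ [] = Mw σ := by
  obtain ⟨l, hfl, hpieces, hlen⟩ := exists_partition σ.length σ le_rfl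
  obtain ⟨w, hw⟩ := exists_walk σ.length l hpieces (by rw [hfl])
  have hub : (Gt σ.length).dist σ [] ≤ Mw σ := by
    have h5 := SimpleGraph.dist_le (w.copy hfl rfl)
    rwa [SimpleGraph.Walk.length_copy, hw, hlen] at h5
  have hreach : (Gt σ.length).Reachable σ [] := ⟨w.copy hfl rfl⟩
  obtain ⟨q, hq⟩ := hreach.exists_walk_length_eq_dist
  have hlb := walk_bound q.reverse
  rw [SimpleGraph.Walk.length_reverse, hq, Mw_nil] at hlb
  omega

lemma Lw_eq (σ : Word) : Lw σ = cutsW ∅ σ := by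
  rcases eq_or_ne σ [] with rfl | h
  · rfl
  · simp only [Lw, if_neg h, dW, dist_eq_Mw, Mw_ne_nil h]
    omega


lemma sum_succ_decomp (n : ℕ) (f : Word → ℕ) :
    ∑ v : Fin (n+1) → Letter, f (List.ofFn v) =
      ∑ a : Letter, ∑ w : Fin n → Letter, f (a :: List.ofFn w) := by
  calc ∑ v : Fin (n+1) → Letter, f (List.ofFn v)
      = ∑ p : Letter × (Fin n → Letter), f (p.1 :: List.ofFn p.2) :=
        Fintype.sum_equiv (Fin.consEquiv fun _ => Letter).symm _ _
          (fun v => by rw [List.ofFn_succ]; rfl)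
    _ = ∑ a : Letter, ∑ w : Fin n → Letter, f (a :: List.ofFn w) :=
        Fintype.sum_prod_type (fun p => f (p.1 :: List.ofFn p.2))

lemma card_univ_fun (n : ℕ) : Fintype.card (Fin n → Letter) = 3 ^ n := by
  simp [Fintype.card_fun]

lemma Hsum : ∀ (n : ℕ) (s : Finset Letter),
    (s.card = 1 → 9 * ∑ v : Fin n → Letter, cutsW s (List.ofFn v)
        = 2 * (n - 1) * 3 ^ n) ∧
    (s.card = 2 → 1 ≤ n → 9 * ∑ v : Fin n → Letter, cutsW s (List.ofFn v)
        = (2 * n + 1) * 3 ^ n) := by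
  intro n
  induction n with
  | zero =>
    intro s
    constructor
    · intro _; simp [cutsW_nil, List.ofFn_zero]
    · intro _ h; omega
  | succ n ih =>
    intro s
    constructor
    · -- s.card = 1
      intro hs1
      rw [sum_succ_decomp, Finset.mul_sum]
      have hins : ∀ (a : Letter) (l : Word), cutsW s (a :: l) = cutsW (insert a s) l := by
        intro a l
        rw [cutsW_cons, if_pos (by have := Finset.card_insert_le a s; omega)]
      simp only [hins]
      rcases Nat.eq_zero_or_pos n with rfl | hn
      · simp [cutsW_nil, List.ofFn_zero]
      · rw [← Finset.sum_add_sum_compl s]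
        have h1 : ∀ a ∈ s, 9 * ∑ w : Fin n → Letter, cutsW (insert a s) (List.ofFn w)
            = 2 * (n - 1) * 3 ^ n := by
          intro a ha
          rw [Finset.insert_eq_self.mpr ha]
          exact (ih s).1 hs1
        have h2 : ∀ a ∈ sᶜ, 9 * ∑ w : Fin n → Letter, cutsW (insert a s) (List.ofFn w)
            = (2 * n + 1) * 3 ^ n := by
          intro a ha
          have hna : a ∉ s := Finset.mem_compl.mp ha
          exact (ih (insert a s)).2
            (by rw [Finset.card_insert_of_notMem hna, hs1]) hn
        rw [Finset.sum_congr rfl h1, Finset.sum_congr rfl h2, Finset.sum_const,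
          Finset.sum_const, hs1, Finset.card_compl, hs1]
        have hcard3 : Fintype.card Letter = 3 := by simp
        rw [hcard3]
        obtain ⟨k, rfl⟩ : ∃ k, n = k + 1 := ⟨n - 1, by omega⟩
        simp only [smul_eq_mul, Nat.add_sub_cancel]
        ring
    · -- s.card = 2
      intro hs2 _
      rw [sum_succ_decomp, Finset.mul_sum, ← Finset.sum_add_sum_compl s]
      have hmem : ∀ a ∈ s, ∀ l : Word, cutsW s (a :: l) = cutsW s l := by
        intro a ha l
        rw [cutsW_cons, Finset.insert_eq_self.mpr ha, if_pos (le_of_eq hs2)]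
      have hout : ∀ a ∈ sᶜ, ∀ l : Word, cutsW s (a :: l) = 1 + cutsW {a} l := by
        intro a ha l
        have hna : a ∉ s := Finset.mem_compl.mp ha
        rw [cutsW_cons, if_neg (by rw [Finset.card_insert_of_notMem hna, hs2]; omega)]
      rcases Nat.eq_zero_or_pos n with rfl | hn
      · -- n = 0 : direct computation
        have h1 : ∀ a ∈ s, 9 * ∑ w : Fin 0 → Letter, cutsW s (a :: List.ofFn w) = 0 := by
          intro a ha
          simp [List.ofFn_zero, hmem a ha, cutsW_nil]
        have h2 : ∀ a ∈ sᶜ, 9 * ∑ w : Fin 0 → Letter, cutsW s (a :: List.ofFn w) = 9 := by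
          intro a ha
          simp [List.ofFn_zero, hout a ha, cutsW_nil]
        rw [Finset.sum_congr rfl h1, Finset.sum_congr rfl h2, Finset.sum_const,
          Finset.sum_const, Finset.card_compl, hs2]
        have hcard3 : Fintype.card Letter = 3 := by simp
        rw [hcard3]
        simp
      · have h1 : ∀ a ∈ s, 9 * ∑ w : Fin n → Letter, cutsW s (a :: List.ofFn w)
            = (2 * n + 1) * 3 ^ n := by
          intro a ha
          simp only [hmem a ha]
          exact (ih s).2 hs2 hn
        have h2 : ∀ a ∈ sᶜ, 9 * ∑ w : Fin n → Letter, cutsW s (a :: List.ofFn w)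
            = 9 * 3 ^ n + 2 * (n - 1) * 3 ^ n := by
          intro a ha
          simp only [hout a ha]
          rw [Finset.sum_add_distrib, Nat.mul_add]
          congr 1
          · rw [Finset.sum_const, Finset.card_univ, card_univ_fun]
            simp [mul_comm]
          · exact (ih {a}).1 (Finset.card_singleton a)
        rw [Finset.sum_congr rfl h1, Finset.sum_congr rfl h2, Finset.sum_const,
          Finset.sum_const, hs2, Finset.card_compl, hs2]
        have hcard3 : Fintype.card Letter = 3 := by simp
        rw [hcard3]
        obtain ⟨k, rfl⟩ : ∃ k, n = k + 1 := ⟨n - 1, by omega⟩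
        simp only [smul_eq_mul, Nat.add_sub_cancel]
        ring

lemma Lw_sum : ∀ m : ℕ, 9 * ∑ v : Fin m → Letter, Lw (List.ofFn v)
    = 2 * (m - 2) * 3 ^ m := by
  intro m
  cases m with
  | zero => simp [Lw_eq, cutsW_nil, List.ofFn_zero]
  | succ n =>
    simp only [Lw_eq]
    rw [sum_succ_decomp, Finset.mul_sum]
    have h1 : ∀ a ∈ (Finset.univ : Finset Letter),
        9 * ∑ w : Fin n → Letter, cutsW ∅ (a :: List.ofFn w) = 2 * (n - 1) * 3 ^ n := by
      intro a _
      simp only [cutsW_empty_cons]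
      exact (Hsum n {a}).1 (Finset.card_singleton a)
    rw [Finset.sum_congr rfl h1, Finset.sum_const, Finset.card_univ]
    have hcard3 : Fintype.card Letter = 3 := by simp
    rw [hcard3]
    have h2 : n + 1 - 2 = n - 1 := by omega
    rw [h2, pow_succ]
    simp only [smul_eq_mul]
    ring

lemma alphaBar_eq (m : ℕ) : alphaBar m = 2 * ((m - 2 : ℕ) : ℝ) / 9 := by
  have h9 : (9:ℝ) * ∑ v : Fin m → Letter, (Lw (List.ofFn v) : ℝ)
      = 2 * ((m - 2 : ℕ) : ℝ) * 3 ^ m := by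
    have := congrArg (fun k : ℕ => (k : ℝ)) (Lw_sum m)
    push_cast at this
    convert this using 2
  unfold alphaBar
  have h3 : (3:ℝ) ^ m ≠ 0 := by positivity
  field_simp
  linarith [h9]

end Aux

/-- `α* = 2/9`, i.e. `sup_{m≥1} ᾱ_m/m = lim_{m→∞} ᾱ_m/m = 2/9`. -/
theorem alphaStar_eq_two_ninths :
    alphaStar = 2 / 9 ∧
    Tendsto (fun m : ℕ => alphaBar m / m) atTop (nhds (2 / 9)) := by
  have hval : ∀ m : ℕ, alphaBar m = 2 * ((m - 2 : ℕ) : ℝ) / 9 := Aux.alphaBar_eq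
  have htend : Tendsto (fun m : ℕ => alphaBar m / m) atTop (nhds (2 / 9)) := by
    have h1 : Tendsto (fun m : ℕ => (1:ℝ) / m) atTop (nhds 0) :=
      tendsto_one_div_atTop_nhds_zero_nat
    have h2 := ((tendsto_const_nhds (x := (2:ℝ)/9) (f := (atTop : Filter ℕ))).sub
      (h1.const_mul ((4:ℝ)/9)))
    have h3 : Tendsto (fun m : ℕ => (2:ℝ)/9 - 4/9 * (1/m)) atTop (nhds (2/9)) := by
      simpa using h2
    refine h3.congr' ?_
    filter_upwards [eventually_ge_atTop 2] with m hm
    have hm0 : (0:ℝ) < m := by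
      have : (2:ℝ) ≤ m := by exact_mod_cast hm
      linarith
    rw [hval m, Nat.cast_sub hm]
    field_simp
    ring
  refine ⟨?_, htend⟩
  have hub : ∀ x ∈ {x : ℝ | ∃ m : ℕ, 1 ≤ m ∧ x = alphaBar m / m}, x ≤ 2/9 := by
    rintro x ⟨m, hm, rfl⟩
    have hm0 : (0:ℝ) < m := by exact_mod_cast hm
    rw [hval m]
    have hc : ((m - 2 : ℕ) : ℝ) ≤ (m : ℝ) := by exact_mod_cast Nat.sub_le m 2
    calc 2 * ((m - 2 : ℕ) : ℝ) / 9 / m ≤ 2 * (m:ℝ) / 9 / m := by gcongr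
      _ = 2/9 := by field_simp
  have hne : ({x : ℝ | ∃ m : ℕ, 1 ≤ m ∧ x = alphaBar m / m}).Nonempty :=
    ⟨alphaBar 1 / 1, 1, le_rfl, by norm_num⟩
  have hba : BddAbove {x : ℝ | ∃ m : ℕ, 1 ≤ m ∧ x = alphaBar m / m} := ⟨2/9, hub⟩
  unfold alphaStar
  refine le_antisymm (csSup_le hne hub) ?_
  refine le_of_tendsto htend ?_
  filter_upwards [eventually_ge_atTop 1] with m hm
  exact le_csSup hba ⟨m, hm, rfl⟩
end

section
/- Self-similarity of the geodesic distance: for t ≥ 1, any letter i ∈ {1,2,3}, and any words σ', τ' with |σ'|, |τ'| ≤ t−1, one has d_t(iσ', iτ') = d_{t−1}(σ', τ'). More generally, for any word β with |β| = k ≤ t and any words σ', τ' with |σ'|, |τ'| ≤ t−k, one has d_t(βσ', βτ') = d_{t−k}(σ', τ'). -/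
open Filter Finset

lemma wordAdj_append_iff (β σ τ : Word) : WordAdj (β ++ σ) (β ++ τ) ↔ WordAdj σ τ := by
  constructor
  · rintro ⟨hne, β'', σ'', τ'', e1, e2, hc⟩
    have hne' : σ ≠ τ := fun h => hne (by rw [h])
    have hpre1 : β <+: β ++ σ := List.prefix_append β σ
    have hpre2 : β'' <+: β ++ σ := ⟨σ'', e1.symm⟩
    rcases List.prefix_or_prefix_of_prefix hpre1 hpre2 with h | h
    · obtain ⟨γ, rfl⟩ := h
      rw [List.append_assoc] at e1 e2
      exact ⟨hne', γ, σ'', τ'', List.append_cancel_left e1,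
        List.append_cancel_left e2, hc⟩
    · obtain ⟨δ, rfl⟩ := h
      rcases δ with _ | ⟨d, δ'⟩
      · rw [List.append_nil] at e1 e2
        have h1 : σ = σ'' := List.append_cancel_left e1
        have h2 : τ = τ'' := List.append_cancel_left e2
        subst h1; subst h2
        exact ⟨hne', [], σ, τ, rfl, rfl, hc⟩
      · rw [List.append_assoc] at e1 e2
        have hs : σ'' = d :: (δ' ++ σ) := (List.append_cancel_left e1).symm
        have ht : τ'' = d :: (δ' ++ τ) := (List.append_cancel_left e2).symm
        rcases hc with ⟨h0, _⟩ | ⟨h0, _⟩ | ⟨i, j, k, k', hij, hi, hj⟩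
        · simp [h0] at hs
        · simp [h0] at ht
        · rw [hi] at hs; rw [hj] at ht
          injection hs with hs1 _
          injection ht with ht1 _
          exact absurd (hs1.trans ht1.symm) hij
  · rintro ⟨hne, β', σ'', τ'', rfl, rfl, hc⟩
    exact ⟨fun h => hne (List.append_cancel_left h), β ++ β', σ'', τ'',
      by rw [List.append_assoc], by rw [List.append_assoc], hc⟩

lemma gt_adj_append_iff (β σ τ : Word) (t : ℕ) (hβ : β.length ≤ t) :
    (Gt t).Adj (β ++ σ) (β ++ τ) ↔ (Gt (t - β.length)).Adj σ τ := by
  simp only [Gt, List.length_append, wordAdj_append_iff]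
  constructor
  · rintro ⟨h1, h2, h3⟩; exact ⟨by omega, by omega, h3⟩
  · rintro ⟨h1, h2, h3⟩; exact ⟨by omega, by omega, h3⟩

/-- Retraction onto words with prefix `β`. -/
def retr (β w : Word) : Word := if β <+: w then w.drop β.length else []

lemma retr_append (β w : Word) : retr β (β ++ w) = w := by
  simp [retr, List.prefix_append, List.drop_left]

lemma card_le_two_of_suffix {ρ σ'' : Word} (h : ρ <:+ σ'')
    (hc : σ''.toFinset.card ≤ 2) : ρ.toFinset.card ≤ 2 := by
  refine le_trans (Finset.card_le_card ?_) hc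
  intro x hx
  exact List.mem_toFinset.2 (h.sublist.subset (List.mem_toFinset.1 hx))

lemma retr_adj {β : Word} {t : ℕ} (hβ : β.length ≤ t) {a b : Word}
    (hab : (Gt t).Adj a b) :
    (Gt (t - β.length)).Adj (retr β a) (retr β b) ∨ retr β a = retr β b := by
  -- key asymmetric case
  have key : ∀ a b : Word, (Gt t).Adj a b → (β <+: a) → ¬ (β <+: b) →
      (Gt (t - β.length)).Adj (retr β a) (retr β b) ∨ retr β a = retr β b := by
    intro a b hab ha hb
    obtain ⟨ρ, rfl⟩ := ha
    obtain ⟨hla, hlb, hne, β'', σ'', τ'', e1, e2, hc⟩ := hab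
    have hpre2 : β'' <+: β ++ ρ := ⟨σ'', e1.symm⟩
    have hβ'' : β'' <+: β := by
      rcases List.prefix_or_prefix_of_prefix (List.prefix_append β ρ) hpre2 with h | h
      · exact absurd (h.trans ⟨τ'', e2.symm⟩) hb
      · exact h
    obtain ⟨δ, rfl⟩ := hβ''
    have hδ : δ ≠ [] := by
      rintro rfl
      exact hb (by rw [List.append_nil]; exact ⟨τ'', e2.symm⟩)
    rw [List.append_assoc] at e1
    have hs : σ'' = δ ++ ρ := (List.append_cancel_left e1).symm
    have hρs : ρ <:+ σ'' := ⟨δ, hs.symm⟩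
    have hcard : σ''.toFinset.card ≤ 2 := by
      rcases hc with ⟨h0, _⟩ | ⟨_, h0⟩ | ⟨i, j, k, k', hij, hi, hj⟩
      · exact absurd (hs ▸ h0) (by simp [hδ])
      · exact h0
      · rw [hi]
        have hsub : (i :: List.replicate k j).toFinset ⊆ ({i, j} : Finset Letter) := by
          intro x hx
          simp only [List.mem_toFinset, List.mem_cons, List.mem_replicate] at hx
          rcases hx with rfl | ⟨_, rfl⟩ <;> simp
        exact le_trans (Finset.card_le_card hsub)
          (le_trans (Finset.card_insert_le i {j}) (by simp))
    rcases eq_or_ne ρ [] with rfl | hρ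
    · right
      simp [retr, List.prefix_append, hb]
    · left
      rw [retr_append]
      simp only [retr, if_neg hb]
      refine ⟨?_, by simp, hρ, [], ρ, [], rfl, rfl,
        Or.inr (Or.inl ⟨rfl, card_le_two_of_suffix hρs hcard⟩)⟩
      simp only [List.length_append] at hla hβ ⊢
      omega
  by_cases ha : β <+: a <;> by_cases hb : β <+: b
  · obtain ⟨σ, rfl⟩ := ha
    obtain ⟨τ, rfl⟩ := hb
    rw [retr_append, retr_append]
    exact Or.inl ((gt_adj_append_iff β σ τ t hβ).1 hab)
  · exact key a b hab ha hb
  · rcases key b a ((Gt t).adj_symm hab) hb ha with h | h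
    · exact Or.inl h.symm
    · exact Or.inr h.symm
  · right; simp [retr, ha, hb]

lemma reachable_nil (t : ℕ) : ∀ w : Word, w.length ≤ t → (Gt t).Reachable w [] := by
  intro w
  induction w using List.reverseRecOn with
  | nil => exact fun _ => SimpleGraph.Reachable.refl []
  | append_singleton l a ih =>
    intro hl
    have hl' : l.length + 1 ≤ t := by simpa using hl
    have h1 : (Gt t).Adj (l ++ [a]) l := by
      refine ⟨hl, by omega, ?_, l, [a], [], rfl, by simp, Or.inr (Or.inl ⟨rfl, by simp⟩)⟩
      intro h
      have := congrArg List.length h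
      simp at this
    exact h1.reachable.trans (ih (by omega))

lemma walk_retr {β : Word} {t : ℕ} (hβ : β.length ≤ t) {a b : Word}
    (p : (Gt t).Walk a b) :
    ∃ q : (Gt (t - β.length)).Walk (retr β a) (retr β b), q.length ≤ p.length := by
  induction p with
  | nil => exact ⟨.nil, le_rfl⟩
  | cons h p ih =>
    obtain ⟨q, hq⟩ := ih
    rcases retr_adj hβ h with h' | h'
    · exact ⟨.cons h' q, by simp only [SimpleGraph.Walk.length_cons]; omega⟩
    · exact ⟨q.copy h'.symm rfl, by
        simp only [SimpleGraph.Walk.length_copy, SimpleGraph.Walk.length_cons]; omega⟩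

lemma dW_prepend (t : ℕ) (β σ' τ' : Word) (hβ : β.length ≤ t)
    (hs : σ'.length ≤ t - β.length) (hτ : τ'.length ≤ t - β.length) :
    dW t (β ++ σ') (β ++ τ') = dW (t - β.length) σ' τ' := by
  have hr1 : (Gt (t - β.length)).Reachable σ' τ' :=
    (reachable_nil _ σ' hs).trans (reachable_nil _ τ' hτ).symm
  have hr2 : (Gt t).Reachable (β ++ σ') (β ++ τ') :=
    (reachable_nil t _ (by simp; omega)).trans (reachable_nil t _ (by simp; omega)).symm
  apply le_antisymm
  · obtain ⟨p, hp⟩ := hr1.exists_walk_length_eq_dist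
    let f : Gt (t - β.length) →g Gt t :=
      ⟨fun w => β ++ w, fun h => (gt_adj_append_iff β _ _ t hβ).2 h⟩
    have := SimpleGraph.dist_le (p.map f)
    rwa [SimpleGraph.Walk.length_map, hp] at this
  · obtain ⟨p, hp⟩ := hr2.exists_walk_length_eq_dist
    obtain ⟨q, hq⟩ := walk_retr hβ p
    have hd := SimpleGraph.dist_le q
    simp only [retr_append] at hd
    unfold dW
    omega

/-- Self-similarity of the geodesic distance: for `t ≥ 1`, letters `i`, and words of length
at most `t-1`, `d_t(iσ', iτ') = d_{t-1}(σ', τ')`; more generally, prepending a common prefix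
`β` of length `k ≤ t` gives `d_t(βσ', βτ') = d_{t-k}(σ', τ')`. -/
theorem dist_self_similar :
    (∀ t : ℕ, 1 ≤ t → ∀ i : Letter, ∀ σ' τ' : Word,
      σ'.length ≤ t - 1 → τ'.length ≤ t - 1 →
      dW t (i :: σ') (i :: τ') = dW (t - 1) σ' τ') ∧
    (∀ t : ℕ, ∀ β σ' τ' : Word, β.length ≤ t →
      σ'.length ≤ t - β.length → τ'.length ≤ t - β.length →
      dW t (β ++ σ') (β ++ τ') = dW (t - β.length) σ' τ') := by
  constructor
  · intro t ht i σ' τ' hs hτ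
    simpa using dW_prepend t [i] σ' τ' (by simpa using ht) (by simpa using hs)
      (by simpa using hτ)
  · exact fun t β σ' τ' hβ hs hτ => dW_prepend t β σ' τ' hβ hs hτ
end

section
/- Stability of distances under enlarging the network: if σ and τ are words with |σ|, |τ| ≤ k and k ≤ t, then d_t(σ,τ) = d_k(σ,τ). In particular, for σ ≠ ∅ the quantity d_t(σ,∅) − 1 does not depend on t as long as t ≥ |σ|. -/
open Filter Finset

lemma Gt_mono {k t : ℕ} (hkt : k ≤ t) : Gt k ≤ Gt t := by
  intro a b hab
  exact ⟨hab.1.trans hkt, hab.2.1.trans hkt, hab.2.2⟩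

lemma reach_nil (k : ℕ) : ∀ σ : Word, σ.length ≤ k → (Gt k).Reachable σ [] := by
  intro σ
  induction σ using List.reverseRecOn with
  | nil => intro _; exact SimpleGraph.Reachable.refl _
  | append_singleton β c ih =>
    intro h
    have hlen : β.length < (β ++ [c]).length := by simp
    have hadj : (Gt k).Adj (β ++ [c]) β := by
      refine ⟨h, (le_of_lt hlen).trans h, ?_, β, [c], [], rfl, (List.append_nil β).symm, ?_⟩
      · intro he; exact absurd (congrArg List.length he) (by simp)
      · exact Or.inr (Or.inl ⟨rfl, by simp⟩)
    exact hadj.reachable.trans (ih ((le_of_lt hlen).trans h))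

lemma adj_take {t k : ℕ} {σ τ : Word} (h : (Gt t).Adj σ τ) :
    σ.take k = τ.take k ∨ (Gt k).Adj (σ.take k) (τ.take k) := by
  obtain ⟨h1, h2, hne, β, σ', τ', e1, e2, h3⟩ := h
  subst e1; subst e2
  rw [List.take_append, List.take_append]
  by_cases hk : k ≤ β.length
  · left
    have : k - β.length = 0 := Nat.sub_eq_zero_of_le hk
    simp [this]
  · right
    push_neg at hk
    set m := k - β.length with hm
    have hm1 : 1 ≤ m := Nat.le_sub_of_add_le (by omega)
    have hβ : β.take k = β := List.take_of_length_le (le_of_lt hk)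
    rw [hβ]
    have hlen1 : (β ++ σ'.take m).length ≤ k := by
      simp only [List.length_append, List.length_take]; omega
    have hlen2 : (β ++ τ'.take m).length ≤ k := by
      simp only [List.length_append, List.length_take]; omega
    have hsub : ∀ l : Word, (l.take m).toFinset.card ≤ l.toFinset.card := by
      intro l
      refine Finset.card_le_card ?_
      intro x hx
      rw [List.mem_toFinset] at hx ⊢
      exact List.take_subset m l hx
    refine ⟨hlen1, hlen2, ?_, β, σ'.take m, τ'.take m, rfl, rfl, ?_⟩
    · -- nonequality
      intro he
      have he' : σ'.take m = τ'.take m := List.append_cancel_left he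
      rcases h3 with ⟨hs, hc⟩ | ⟨ht, hc⟩ | ⟨i, j, a, b, hij, hs, ht⟩
      · subst hs
        have hτ : τ' ≠ [] := fun hh => hne (by simp [hh])
        have : τ'.take m ≠ [] := by
          intro hh
          rcases τ' with _ | ⟨c, l⟩
          · exact hτ rfl
          · rw [List.take_cons (by omega)] at hh; exact List.cons_ne_nil _ _ hh
        exact this (by simpa using he'.symm)
      · subst ht
        have hσ : σ' ≠ [] := fun hh => hne (by simp [hh])
        have : σ'.take m ≠ [] := by
          intro hh
          rcases σ' with _ | ⟨c, l⟩
          · exact hσ rfl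
          · rw [List.take_cons (by omega)] at hh; exact List.cons_ne_nil _ _ hh
        exact this (by simpa using he')
      · subst hs; subst ht
        rw [List.take_cons (by omega), List.take_cons (by omega)] at he'
        exact hij (List.head_eq_of_cons_eq he')
    · rcases h3 with ⟨hs, hc⟩ | ⟨ht, hc⟩ | ⟨i, j, a, b, hij, hs, ht⟩
      · subst hs
        exact Or.inl ⟨by simp, le_trans (hsub τ') hc⟩
      · subst ht
        exact Or.inr (Or.inl ⟨by simp, le_trans (hsub σ') hc⟩)
      · subst hs; subst ht
        refine Or.inr (Or.inr ⟨i, j, min (m - 1) a, min (m - 1) b, hij, ?_, ?_⟩)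
        · rw [List.take_cons (by omega), List.take_replicate]
        · rw [List.take_cons (by omega), List.take_replicate]

lemma walk_proj {t k : ℕ} {σ τ : Word} (p : (Gt t).Walk σ τ) :
    ∃ q : (Gt k).Walk (σ.take k) (τ.take k), q.length ≤ p.length := by
  induction p with
  | nil => exact ⟨SimpleGraph.Walk.nil, le_refl _⟩
  | cons h p ih =>
    obtain ⟨q, hq⟩ := ih
    rcases adj_take (k := k) h with he | ha
    · rw [he]; exact ⟨q, hq.trans (by simp)⟩
    · exact ⟨SimpleGraph.Walk.cons ha q, by simpa using Nat.succ_le_succ hq⟩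

lemma dW_stable {k t : ℕ} (hkt : k ≤ t) {σ τ : Word}
    (hσ : σ.length ≤ k) (hτ : τ.length ≤ k) : dW t σ τ = dW k σ τ := by
  have hreach : (Gt k).Reachable σ τ :=
    (reach_nil k σ hσ).trans (reach_nil k τ hτ).symm
  refine le_antisymm ?_ ?_
  · obtain ⟨p, hp⟩ := hreach.exists_walk_length_eq_dist
    have := SimpleGraph.dist_le (p.mapLe (Gt_mono hkt))
    simpa [dW, hp] using this
  · obtain ⟨p, hp⟩ := (hreach.mono (Gt_mono hkt)).exists_walk_length_eq_dist
    obtain ⟨q, hq⟩ := walk_proj (k := k) p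
    have hd := SimpleGraph.dist_le
      (q.copy (List.take_of_length_le hσ) (List.take_of_length_le hτ))
    rw [SimpleGraph.Walk.length_copy] at hd
    simp only [dW]
    omega

/-- Stability of distances under enlarging the network: if `|σ|, |τ| ≤ k ≤ t`, then
`d_t(σ,τ) = d_k(σ,τ)`; in particular, for `σ ≠ ∅`, the quantity `d_t(σ,∅) − 1` does not
depend on `t ≥ |σ|` (it equals `L(σ)`). -/
theorem dist_stable_under_enlarging :
    (∀ k t : ℕ, k ≤ t → ∀ σ τ : Word, σ.length ≤ k → τ.length ≤ k →
      dW t σ τ = dW k σ τ) ∧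
    (∀ σ : Word, σ ≠ [] → ∀ t : ℕ, σ.length ≤ t → dW t σ [] - 1 = Lw σ) := by
  constructor
  · intro k t hkt σ τ hσ hτ
    exact dW_stable hkt hσ hτ
  · intro σ hσ t ht
    rw [Lw, if_neg hσ, dW_stable ht (le_refl _) (Nat.zero_le _)]
end

section
/- For any nonempty words τ and σ, one has L(τ) + L(σ) ≤ L(τσ) ≤ L(τ) + L(σ) + 1, where τσ denotes the concatenation of τ and σ. -/
open Filter Finset

/-! ### Auxiliary development: minimum partition count -/

/-- A good partition of `σ`: pieces concatenate to `σ` and each uses at most two letters. -/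
def goodPart (σ : Word) (ps : List Word) : Prop :=
  ps.flatten = σ ∧ ∀ p ∈ ps, p.toFinset.card ≤ 2

/-- Minimal number of pieces in a good partition. -/
noncomputable def mW (σ : Word) : ℕ :=
  sInf {n | ∃ ps : List Word, goodPart σ ps ∧ ps.length = n}

lemma goodPart_singletons (σ : Word) :
    goodPart σ (σ.map fun a => [a]) := by
  constructor
  · induction σ with
    | nil => simp
    | cons a tl ih => simp_all
  · intro p hp
    simp only [List.mem_map] at hp
    obtain ⟨a, _, rfl⟩ := hp
    simp

lemma mW_spec (σ : Word) : ∃ ps : List Word, goodPart σ ps ∧ ps.length = mW σ := by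
  have h : (σ.map fun a => [a]).length ∈
      {n | ∃ ps : List Word, goodPart σ ps ∧ ps.length = n} :=
    ⟨_, goodPart_singletons σ, rfl⟩
  exact Nat.sInf_mem ⟨_, h⟩

lemma mW_le {σ : Word} {ps : List Word} (h : goodPart σ ps) : mW σ ≤ ps.length :=
  Nat.sInf_le ⟨ps, h, rfl⟩

lemma mW_nil : mW [] = 0 :=
  Nat.le_zero.mp (mW_le (σ := []) (ps := []) ⟨rfl, by simp⟩)

lemma mW_pos {σ : Word} (h : σ ≠ []) : 1 ≤ mW σ := by
  by_contra hc
  obtain ⟨ps, ⟨hflat, _⟩, hlen⟩ := mW_spec σ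
  have : ps.length = 0 := by omega
  have hps : ps = [] := List.length_eq_zero_iff.mp this
  subst hps
  exact h (by simpa using hflat.symm)

lemma card_le_of_forall_mem {a b : Word} (h : ∀ x ∈ a, x ∈ b)
    (hb : b.toFinset.card ≤ 2) : a.toFinset.card ≤ 2 :=
  le_trans (Finset.card_le_card fun x hx => by
    simp only [List.mem_toFinset] at *
    exact h x hx) hb

/-- Key splitting lemma: a good partition of `α ++ β` yields good partitions of `α` and
`β` with at most one extra piece in total. -/
lemma split_part : ∀ (ps : List Word) (α β : Word), ps.flatten = α ++ β →
    (∀ p ∈ ps, p.toFinset.card ≤ 2) →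
    ∃ qs rs : List Word, goodPart α qs ∧ goodPart β rs ∧
      qs.length + rs.length ≤ ps.length + 1 := by
  intro ps
  induction ps with
  | nil =>
    intro α β hflat _
    have h0 : α ++ β = [] := by simpa using hflat.symm
    have h := List.append_eq_nil_iff.mp h0
    exact ⟨[], [], ⟨by simp [h.1], by simp⟩, ⟨by simp [h.2], by simp⟩, by simp⟩
  | cons p rest ih =>
    intro α β hflat hcard
    have hflat' : p ++ rest.flatten = α ++ β := by simpa using hflat
    rcases List.append_eq_append_iff.mp hflat' with ⟨a', ha1, ha2⟩ | ⟨c', hc1, hc2⟩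
    · -- α = p ++ a', rest.flatten = a' ++ β
      obtain ⟨qs, rs, hq, hr, hlen⟩ := ih a' β ha2 (fun x hx => hcard x (by simp [hx]))
      refine ⟨p :: qs, rs, ⟨by simp [hq.1, ha1], ?_⟩, hr, by simp; omega⟩
      intro x hx
      rcases List.mem_cons.mp hx with rfl | hx
      · exact hcard x (by simp)
      · exact hq.2 x hx
    · -- p = α ++ c', β = c' ++ rest.flatten
      have hp2 : p.toFinset.card ≤ 2 := hcard p (by simp)
      refine ⟨[α], c' :: rest, ⟨by simp, ?_⟩, ⟨by simp [hc2], ?_⟩, by simp; omega⟩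
      · intro x hx
        simp only [List.mem_singleton] at hx
        subst hx
        exact card_le_of_forall_mem (fun y hy => by simp [hc1, hy]) hp2
      · intro x hx
        rcases List.mem_cons.mp hx with rfl | hx
        · exact card_le_of_forall_mem (fun y hy => by simp [hc1, hy]) hp2
        · exact hcard x (by simp [hx])

lemma mW_append_le (α β : Word) : mW (α ++ β) ≤ mW α + mW β := by
  obtain ⟨ps, hps, hpl⟩ := mW_spec α
  obtain ⟨qs, hqs, hql⟩ := mW_spec β
  have : goodPart (α ++ β) (ps ++ qs) := by
    constructor
    · simp [hps.1, hqs.1]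
    · intro x hx
      rcases List.mem_append.mp hx with h | h
      exacts [hps.2 x h, hqs.2 x h]
  calc mW (α ++ β) ≤ (ps ++ qs).length := mW_le this
    _ = mW α + mW β := by simp [hpl, hql]

lemma mW_add_le (α β : Word) : mW α + mW β ≤ mW (α ++ β) + 1 := by
  obtain ⟨ps, ⟨hflat, hcard⟩, hlen⟩ := mW_spec (α ++ β)
  obtain ⟨qs, rs, hq, hr, h⟩ := split_part ps α β hflat hcard
  have h1 := mW_le hq
  have h2 := mW_le hr
  omega

lemma mW_prefix_le (α β : Word) : mW α ≤ mW (α ++ β) := by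
  rcases eq_or_ne β [] with rfl | hβ
  · simp
  obtain ⟨ps, ⟨hflat, hcard⟩, hlen⟩ := mW_spec (α ++ β)
  obtain ⟨qs, rs, hq, hr, h⟩ := split_part ps α β hflat hcard
  have h1 := mW_le hq
  have h2 : rs ≠ [] := by
    intro hc
    subst hc
    exact hβ (by simpa using hr.1.symm)
  have h3 : 1 ≤ rs.length := List.length_pos_iff.mpr h2
  omega

lemma mW_le_one {σ : Word} (h : σ.toFinset.card ≤ 2) : mW σ ≤ 1 := by
  have : goodPart σ [σ] := ⟨by simp, by simpa using h⟩
  simpa using mW_le this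

lemma pair_card {i j : Letter} {σ : Word} (h : ∀ x ∈ σ, x = i ∨ x = j) :
    σ.toFinset.card ≤ 2 := by
  have hsub : σ.toFinset ⊆ {i, j} := by
    intro x hx
    simp only [List.mem_toFinset] at hx
    rcases h x hx with rfl | rfl <;> simp
  calc σ.toFinset.card ≤ ({i, j} : Finset Letter).card := Finset.card_le_card hsub
    _ ≤ 2 := Finset.card_insert_le i {j} |>.trans (by simp)

/-- Lipschitz property of `mW` along edges. -/
lemma mW_lipschitz {σ τ : Word} (h : WordAdj σ τ) : mW τ ≤ mW σ + 1 := by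
  obtain ⟨hne, β, σ', τ', rfl, rfl, hcase⟩ := h
  rcases hcase with ⟨rfl, hc⟩ | ⟨rfl, hc⟩ | ⟨i, j, k, k', hij, rfl, rfl⟩
  · calc mW (β ++ τ') ≤ mW β + mW τ' := mW_append_le β τ'
      _ ≤ mW β + 1 := by have := mW_le_one hc; omega
      _ = mW (β ++ []) + 1 := by simp
  · calc mW (β ++ []) = mW β := by simp
      _ ≤ mW (β ++ σ') := mW_prefix_le β σ'
      _ ≤ mW (β ++ σ') + 1 := Nat.le_succ _
  · have hc : (j :: List.replicate k' i).toFinset.card ≤ 2 := by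
      apply pair_card (i := i) (j := j)
      intro x hx
      rcases List.mem_cons.mp hx with rfl | hx
      · right; rfl
      · left; exact List.eq_of_mem_replicate hx
    calc mW (β ++ (j :: List.replicate k' i))
        ≤ mW β + mW (j :: List.replicate k' i) := mW_append_le _ _
      _ ≤ mW β + 1 := by have := mW_le_one hc; omega
      _ ≤ mW (β ++ (i :: List.replicate k j)) + 1 := by
          have := mW_prefix_le β (i :: List.replicate k j)
          omega

lemma mW_le_of_walk {t : ℕ} : ∀ {σ τ : Word} (w : (Gt t).Walk σ τ),
    mW σ ≤ mW τ + w.length := by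
  intro σ τ w
  induction w with
  | nil => simp
  | @cons u v _ h q ih =>
    have hadj : WordAdj v u := ((Gt t).adj_symm h).2.2
    have := mW_lipschitz hadj
    simp only [SimpleGraph.Walk.length_cons]
    omega

lemma exists_walk_of_part (t : ℕ) : ∀ (ps : List Word) (σ : Word),
    ps.flatten = σ →
    (∀ p ∈ ps, p.toFinset.card ≤ 2) → σ.length ≤ t →
    ∃ w : (Gt t).Walk σ [], w.length ≤ ps.length := by
  intro ps
  induction ps using List.reverseRecOn with
  | nil =>
    intro σ hσ _ _
    obtain rfl : σ = [] := by simpa using hσ.symm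
    exact ⟨SimpleGraph.Walk.nil, by simp⟩
  | append_singleton qs p ih =>
    intro σ hσ hcard hlen
    obtain rfl : σ = qs.flatten ++ p := by simpa using hσ.symm
    have hqlen : qs.flatten.length ≤ t := by
      have : qs.flatten.length ≤ (qs.flatten ++ p).length := by simp
      omega
    obtain ⟨w0, hw0⟩ := ih qs.flatten rfl (fun x hx => hcard x (by simp [hx])) hqlen
    rcases eq_or_ne p [] with rfl | hp
    · obtain ⟨w1, hw1⟩ := ih (qs.flatten ++ []) (by simp)
        (fun x hx => hcard x (by simp [hx])) hlen
      exact ⟨w1, by simp; omega⟩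
    · have hadj : (Gt t).Adj (qs.flatten ++ p) qs.flatten := by
        show (qs.flatten ++ p).length ≤ t ∧ qs.flatten.length ≤ t ∧ WordAdj (qs.flatten ++ p) qs.flatten
        refine ⟨hlen, hqlen, ?_, qs.flatten, p, [], rfl, by simp,
          Or.inr (Or.inl ⟨rfl, hcard p (by simp)⟩)⟩
        intro hc
        have : (qs.flatten ++ p).length = qs.flatten.length := by rw [hc]
        simp only [List.length_append] at this
        exact hp (List.length_eq_zero_iff.mp (by omega))
      refine ⟨SimpleGraph.Walk.cons hadj w0, ?_⟩
      simp only [SimpleGraph.Walk.length_cons, List.length_append, List.length_cons]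
      omega

lemma dist_eq_mW {t : ℕ} {σ : Word} (h : σ.length ≤ t) :
    (Gt t).dist σ [] = mW σ := by
  obtain ⟨ps, ⟨hflat, hcard⟩, hlen⟩ := mW_spec σ
  obtain ⟨w, hw⟩ := exists_walk_of_part t ps σ hflat hcard h
  have hub : (Gt t).dist σ [] ≤ mW σ :=
    le_trans (SimpleGraph.dist_le w) (by omega)
  have hreach : (Gt t).Reachable σ [] := ⟨w⟩
  obtain ⟨p, hp⟩ := hreach.exists_walk_length_eq_dist
  have hlb := mW_le_of_walk p
  rw [mW_nil, hp] at hlb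
  omega

/-- For any nonempty words `τ` and `σ`, `L(τ) + L(σ) ≤ L(τσ) ≤ L(τ) + L(σ) + 1`. -/
theorem L_concat_bounds (τ σ : Word) (hτ : τ ≠ []) (hσ : σ ≠ []) :
    Lw τ + Lw σ ≤ Lw (τ ++ σ) ∧ Lw (τ ++ σ) ≤ Lw τ + Lw σ + 1 := by
  have hτσ : τ ++ σ ≠ [] := by simp [hτ]
  have e1 : Lw τ = mW τ - 1 := by
    simp only [Lw, hτ, if_neg, dW]
    rw [dist_eq_mW le_rfl]
    simp
  have e2 : Lw σ = mW σ - 1 := by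
    simp only [Lw, hσ, if_neg, dW]
    rw [dist_eq_mW le_rfl]
    simp
  have e3 : Lw (τ ++ σ) = mW (τ ++ σ) - 1 := by
    simp only [Lw, hτσ, if_neg, dW]
    rw [dist_eq_mW le_rfl]
    simp
  have h1 := mW_append_le τ σ
  have h2 := mW_add_le τ σ
  have p1 := mW_pos hτ
  have p2 := mW_pos hσ
  have p3 := mW_pos hτσ
  rw [e1, e2, e3]
  omega
end

section
/- Let σ and τ be nonempty words such that f(σ) is a (not necessarily proper) prefix of f(τ) and f(τ) is a (not necessarily proper) prefix of σ. Then for every k ≥ 1, f^k(σ) is a prefix of f^k(τ) and f^k(τ) is a prefix of f^{k−1}(σ). Consequently |ω(σ) − ω(τ)| ≤ 1. -/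
open Filter Finset

lemma fW_prefix_mono {α β : Word} (h : α <+: β) : fW α <+: fW β := by
  obtain ⟨r, rfl⟩ := h
  set p := (α ++ r).length - suffLen (α ++ r) with hp
  set q := α.length - suffLen α with hq
  have hqα : q ≤ α.length := Nat.sub_le _ _
  have hspec : (((α ++ r)).drop p).toFinset.card ≤ 2 := by
    have := Nat.findGreatest_spec (P := fun m => (((α ++ r)).drop ((α ++ r).length - m)).toFinset.card ≤ 2)
      (Nat.zero_le (α ++ r).length) (by simp)
    simpa [hp, suffLen] using this
  have hqp : q ≤ p := by
    rcases le_or_gt α.length p with hc | hc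
    · exact hqα.trans hc
    · -- p < α.length : the suffix of α from p has ≤ 2 letters
      have hPα : ((α).drop ((α).length - (α.length - p))).toFinset.card ≤ 2 := by
        have hsub : α.length - (α.length - p) = p := by omega
        rw [hsub]
        have hpref : α.drop p <+: (α ++ r).drop p := by
          rw [List.drop_append_of_le_length hc.le]
          exact ⟨r, rfl⟩
        calc (α.drop p).toFinset.card ≤ ((α ++ r).drop p).toFinset.card :=
              Finset.card_le_card (fun x hx => by
                simp only [List.mem_toFinset] at hx ⊢
                exact hpref.subset hx)
          _ ≤ 2 := hspec
      have hle : α.length - p ≤ suffLen α :=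
        Nat.le_findGreatest (Nat.sub_le _ _) hPα
      omega
  have h1 : fW α = (α ++ r).take q := by
    rw [fW, ← hq, List.take_append_of_le_length hqα]
  rw [h1, fW, ← hp]
  have : (α ++ r).take q = ((α ++ r).take p).take q := by
    rw [List.take_take, min_eq_left hqp]
  rw [this]
  exact List.take_prefix _ _

lemma fW_iter_len_nil (σ : Word) : fW^[σ.length] σ = [] := by
  generalize hn : σ.length = n
  induction n using Nat.strong_induction_on generalizing σ with
  | _ n ih =>
    rcases Nat.eq_zero_or_pos n with rfl | hpos
    · simpa using (List.length_eq_zero_iff.mp hn)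
    · have hne : σ ≠ [] := by rintro rfl; simp at hn; omega
      have hlt : (fW σ).length < n := hn ▸ fW_length_lt hne
      obtain ⟨m, hm⟩ : ∃ m, n = (fW σ).length + m + 1 := ⟨n - (fW σ).length - 1, by omega⟩
      have base := ih (fW σ).length hlt (fW σ) rfl
      have e : fW^[n] σ = fW^[m] (fW^[(fW σ).length] (fW σ)) := by
        rw [← Function.iterate_add_apply, ← Function.iterate_succ_apply]
        congr 1
        omega
      rw [e, base]
      exact Function.iterate_fixed rfl m

lemma omegaW_spec (σ : Word) : fW^[omegaW σ] σ = [] := by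
  have : (omegaW σ) ∈ {n : ℕ | fW^[n] σ = []} :=
    Nat.sInf_mem ⟨σ.length, fW_iter_len_nil σ⟩
  exact this

lemma omegaW_le {σ : Word} {n : ℕ} (h : fW^[n] σ = []) : omegaW σ ≤ n :=
  Nat.sInf_le h

lemma omegaW_pos {σ : Word} (h : σ ≠ []) : 1 ≤ omegaW σ := by
  rcases Nat.eq_zero_or_pos (omegaW σ) with h0 | hp
  · have := omegaW_spec σ
    rw [h0] at this
    exact absurd this h
  · exact hp

/-- If `σ, τ` are nonempty words with `f(σ)` a prefix of `f(τ)` and `f(τ)` a prefix of `σ`,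
then for every `k ≥ 1`, `f^k(σ)` is a prefix of `f^k(τ)` and `f^k(τ)` is a prefix of
`f^{k-1}(σ)`; consequently `|ω(σ) − ω(τ)| ≤ 1`. -/
theorem f_iterate_prefix (σ τ : Word) (hσ : σ ≠ []) (hτ : τ ≠ [])
    (h1 : fW σ <+: fW τ) (h2 : fW τ <+: σ) :
    (∀ k : ℕ, 1 ≤ k → (fW^[k] σ <+: fW^[k] τ) ∧ (fW^[k] τ <+: fW^[k - 1] σ)) ∧
    |(omegaW σ : ℤ) - (omegaW τ : ℤ)| ≤ 1 := by
  have key : ∀ k : ℕ, (fW^[k+1] σ <+: fW^[k+1] τ) ∧ (fW^[k+1] τ <+: fW^[k] σ) := by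
    intro k
    induction k with
    | zero => exact ⟨h1, h2⟩
    | succ n ih =>
      have a := fW_prefix_mono ih.1
      have b := fW_prefix_mono ih.2
      rw [← Function.iterate_succ_apply' fW (n+1) σ, ← Function.iterate_succ_apply' fW (n+1) τ] at a
      rw [← Function.iterate_succ_apply' fW (n+1) τ, ← Function.iterate_succ_apply' fW n σ] at b
      exact ⟨a, b⟩
  constructor
  · intro k hk
    obtain ⟨m, rfl⟩ : ∃ m, k = m + 1 := ⟨k - 1, by omega⟩
    simpa using key m
  · have hτσ : omegaW σ ≤ omegaW τ := by
      have hτpos := omegaW_pos hτ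
      obtain ⟨m, hm⟩ : ∃ m, omegaW τ = m + 1 := ⟨omegaW τ - 1, by omega⟩
      have hnil : fW^[m+1] σ = [] := by
        have hsp := omegaW_spec τ
        rw [hm] at hsp
        have := (key m).1
        rw [hsp, List.prefix_nil] at this
        exact this
      rw [hm]
      exact omegaW_le hnil
    have hστ : omegaW τ ≤ omegaW σ + 1 := by
      have hσpos := omegaW_pos hσ
      obtain ⟨m, hm⟩ : ∃ m, omegaW σ = m + 1 := ⟨omegaW σ - 1, by omega⟩
      have hnil : fW^[m+2] τ = [] := by
        have hsp := omegaW_spec σ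
        rw [hm] at hsp
        have := (key (m+1)).2
        rw [hsp, List.prefix_nil] at this
        exact this
      rw [hm]
      exact omegaW_le hnil
    have e1 : (omegaW σ : ℤ) ≤ omegaW τ := by exact_mod_cast hτσ
    have e2 : (omegaW τ : ℤ) ≤ omegaW σ + 1 := by exact_mod_cast hστ
    rw [abs_le]
    constructor <;> omega
end

section
/- For every t ≥ 1 one has κ_t ≤ α*·t, and lim_{t→∞} κ_t/t = α*, where α* = sup_{m≥1} ᾱ_m/m. -/
open Filter Finset

lemma Gt_adj {t : ℕ} {σ τ : Word} :
    (Gt t).Adj σ τ ↔ σ.length ≤ t ∧ τ.length ≤ t ∧ WordAdj σ τ := Iff.rfl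

-- longest common prefix
def lcp : Word → Word → Word
  | a :: as, b :: bs => if a = b then a :: lcp as bs else []
  | _, _ => []

@[simp] lemma lcp_nil_left (y : Word) : lcp [] y = [] := by cases y <;> rfl
@[simp] lemma lcp_nil_right (x : Word) : lcp x [] = [] := by cases x <;> rfl

lemma lcp_prefix_left : ∀ x y : Word, lcp x y <+: x
  | [], y => by simp
  | a :: as, [] => by simp
  | a :: as, b :: bs => by
      rw [lcp]
      split
      · exact List.cons_prefix_cons.mpr ⟨rfl, lcp_prefix_left as bs⟩
      · simp

lemma lcp_prefix_right : ∀ x y : Word, lcp x y <+: y := by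
  intro x y
  induction x generalizing y with
  | nil => simp
  | cons a as ih =>
    cases y with
    | nil => simp
    | cons b bs =>
      rw [lcp]
      split
      · rename_i h; subst h; exact List.cons_prefix_cons.mpr ⟨rfl, ih bs⟩
      · simp

lemma lcp_append (β : Word) : ∀ x y : Word, lcp (β ++ x) (β ++ y) = β ++ lcp x y := by
  induction β with
  | nil => simp
  | cons a bs ih => intro x y; simp [lcp, ih]

lemma lcp_eq_left : ∀ {x y : Word}, x <+: y → lcp x y = x := by
  intro x y h
  obtain ⟨t, rfl⟩ := h
  have := lcp_append x [] t
  simpa using this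

lemma lcp_of_not_prefix : ∀ (β : Word) (σ : Word) (x : Word), ¬ β <+: σ → lcp (β ++ x) σ = lcp β σ
  | [], σ, x, h => absurd (List.nil_prefix) h
  | a :: bs, [], x, h => by simp
  | a :: bs, b :: σ', x, h => by
      rw [List.cons_append, lcp, lcp]
      split
      · rename_i hab; subst hab
        rw [lcp_of_not_prefix bs σ' x (fun hp => h (List.cons_prefix_cons.mpr ⟨rfl, hp⟩))]
      · rfl

section Adj

lemma letters_subset {x y : Word} (h : x ⊆ y) : x.toFinset ⊆ y.toFinset := by
  intro a ha; rw [List.mem_toFinset] at *; exact h ha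

lemma card_le_two_of_subset {x y : Word} (h : x ⊆ y) (hy : y.toFinset.card ≤ 2) :
    x.toFinset.card ≤ 2 :=
  le_trans (Finset.card_le_card (letters_subset h)) hy

lemma rep_card (i j : Letter) (k : ℕ) : (i :: List.replicate k j).toFinset.card ≤ 2 := by
  have hsub : (i :: List.replicate k j).toFinset ⊆ {i, j} := by
    intro a ha
    simp only [List.mem_toFinset, List.mem_cons, List.mem_replicate] at ha
    rcases ha with rfl | ⟨_, rfl⟩ <;> simp
  exact le_trans (Finset.card_le_card hsub) (Finset.card_insert_le _ _ |>.trans (by simp))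

lemma wordAdj_parts {σ' τ' : Word}
    (hD : (σ' = [] ∧ τ'.toFinset.card ≤ 2) ∨
     (τ' = [] ∧ σ'.toFinset.card ≤ 2) ∨
     (∃ (i j : Letter) (k k' : ℕ), i ≠ j ∧
        σ' = i :: List.replicate k j ∧ τ' = j :: List.replicate k' i)) :
    σ'.toFinset.card ≤ 2 ∧ τ'.toFinset.card ≤ 2 := by
  rcases hD with ⟨rfl, h⟩ | ⟨rfl, h⟩ | ⟨i, j, k, k', _, rfl, rfl⟩
  · exact ⟨by simp, h⟩
  · exact ⟨h, by simp⟩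
  · exact ⟨rep_card _ _ _, rep_card _ _ _⟩

lemma wordAdj_symm {a b : Word} (h : WordAdj a b) : WordAdj b a := by
  obtain ⟨hne, β, x, y, e1, e2, hD⟩ := h
  refine ⟨hne.symm, β, y, x, e2, e1, ?_⟩
  rcases hD with ⟨h1, h2⟩ | ⟨h1, h2⟩ | ⟨i, j, k, k', hij, hx, hy⟩
  · exact Or.inr (Or.inl ⟨h1, h2⟩)
  · exact Or.inl ⟨h1, h2⟩
  · exact Or.inr (Or.inr ⟨j, i, k', k, hij.symm, hy, hx⟩)

/-- one-step adjacency from a word to an extension by a ≤2-letter suffix -/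
lemma wordAdj_of_prefix {p q : Word} (h : p <+: q)
    (hc : ∀ r, q = p ++ r → r.toFinset.card ≤ 2) : p = q ∨ WordAdj p q := by
  obtain ⟨r, rfl⟩ := h
  rcases eq_or_ne r [] with rfl | hr
  · left; simp
  · right
    refine ⟨by simpa using hr.symm, p, [], r, by simp, rfl, Or.inl ⟨rfl, hc r rfl⟩⟩

lemma lcp_lip {ρ ρ' σ : Word} (h : WordAdj ρ ρ') :
    lcp ρ σ = lcp ρ' σ ∨ WordAdj (lcp ρ σ) (lcp ρ' σ) := by
  obtain ⟨hne, β, x, y, rfl, rfl, hD⟩ := h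
  obtain ⟨hx, hy⟩ := wordAdj_parts hD
  by_cases hβ : β <+: σ
  · obtain ⟨sg, rfl⟩ := hβ
    rw [lcp_append, lcp_append]
    have hu : lcp x sg <+: sg := lcp_prefix_right _ _
    have hv : lcp y sg <+: sg := lcp_prefix_right _ _
    rcases List.prefix_or_prefix_of_prefix hu hv with hp | hp
    · obtain ⟨r, hr⟩ := hp
      have hrsub : r ⊆ y := by
        have : r ⊆ lcp y sg := (List.IsSuffix.subset ⟨lcp x sg, hr⟩)
        exact fun z hz => (lcp_prefix_left y sg).subset (this hz)
      have := wordAdj_of_prefix (p := β ++ lcp x sg) (q := β ++ lcp y sg)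
        ⟨r, by rw [List.append_assoc, hr]⟩
        (fun r' hr' => by
          have : r' = r := by
            apply List.append_cancel_left (as := β ++ lcp x sg)
            rw [← hr', List.append_assoc, hr]
          subst this
          exact card_le_two_of_subset hrsub hy)
      tauto
    · obtain ⟨r, hr⟩ := hp
      have hrsub : r ⊆ x := by
        have : r ⊆ lcp x sg := (List.IsSuffix.subset ⟨lcp y sg, hr⟩)
        exact fun z hz => (lcp_prefix_left x sg).subset (this hz)
      have := wordAdj_of_prefix (p := β ++ lcp y sg) (q := β ++ lcp x sg)
        ⟨r, by rw [List.append_assoc, hr]⟩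
        (fun r' hr' => by
          have : r' = r := by
            apply List.append_cancel_left (as := β ++ lcp y sg)
            rw [← hr', List.append_assoc, hr]
          subst this
          exact card_le_two_of_subset hrsub hx)
      rcases this with h' | h'
      · left; exact h'.symm
      · right; exact wordAdj_symm h'
  · rw [lcp_of_not_prefix β σ x hβ, lcp_of_not_prefix β σ y hβ]
    left; rfl

end Adj

section Graph

lemma exists_walk_to_nil (t : ℕ) (σ : Word) (h : σ.length ≤ t) :
    ∃ p : (Gt t).Walk σ [], p.length = σ.length := by
  induction σ using List.reverseRecOn with
  | nil => exact ⟨SimpleGraph.Walk.nil, rfl⟩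
  | append_singleton xs a ih =>
      have hlen : xs.length ≤ t := by simp at h; omega
      obtain ⟨p, hp⟩ := ih hlen
      have hadj : (Gt t).Adj (xs ++ [a]) xs := by
        refine Gt_adj.mpr ⟨h, hlen, ?_, xs, [a], [], rfl, by simp, Or.inr (Or.inl ⟨rfl, by simp⟩)⟩
        simp
      exact ⟨SimpleGraph.Walk.cons hadj p, by simp [hp]⟩

lemma reachable_nil_s11 {t : ℕ} {σ : Word} (h : σ.length ≤ t) : (Gt t).Reachable σ [] :=
  ⟨(exists_walk_to_nil t σ h).choose⟩

lemma dW_le_length {t : ℕ} {σ : Word} (h : σ.length ≤ t) : dW t σ [] ≤ σ.length := by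
  obtain ⟨p, hp⟩ := exists_walk_to_nil t σ h
  exact hp ▸ SimpleGraph.dist_le p

lemma dW_pos {t : ℕ} {σ : Word} (hσ : σ ≠ []) (h : σ.length ≤ t) : 1 ≤ dW t σ [] :=
  (reachable_nil_s11 h).pos_dist_of_ne hσ

lemma dW_le_succ_of_adj {t : ℕ} {a b : Word} (h : (Gt t).Adj a b) (hb : b.length ≤ t) :
    dW t a [] ≤ dW t b [] + 1 := by
  obtain ⟨p, hp⟩ := (reachable_nil_s11 hb).exists_walk_length_eq_dist
  have := SimpleGraph.dist_le (SimpleGraph.Walk.cons h p)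
  simpa [hp, dW, Nat.add_comm] using this

lemma dW_le_one {t : ℕ} {a : Word} (ha : a.length ≤ t) (hc : a.toFinset.card ≤ 2) :
    dW t a [] ≤ 1 := by
  rcases eq_or_ne a [] with rfl | hne
  · simp [dW, SimpleGraph.dist_self]
  · have hadj : (Gt t).Adj a [] :=
      Gt_adj.mpr ⟨ha, by simp, hne, [], a, [], by simp, by simp, Or.inr (Or.inl ⟨rfl, hc⟩)⟩
    simpa [dW] using SimpleGraph.dist_le (SimpleGraph.Walk.cons hadj SimpleGraph.Walk.nil)

lemma cone_adj {m n : ℕ} {σ a b : Word} (hσm : σ.length = m)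
    (h : (Gt (m + n)).Adj (σ ++ a) (σ ++ b)) : (Gt n).Adj a b := by
  obtain ⟨h1, h2, hne, β, x, y, e1, e2, hD⟩ := Gt_adj.mp h
  have hal : a.length ≤ n := by simp [hσm] at h1; omega
  have hbl : b.length ≤ n := by simp [hσm] at h2; omega
  have hab : a ≠ b := fun hh => hne (by rw [hh])
  refine Gt_adj.mpr ⟨hal, hbl, hab, ?_⟩
  rcases List.prefix_or_prefix_of_prefix (⟨x, e1.symm⟩ : β <+: σ ++ a)
      (⟨a, rfl⟩ : σ <+: σ ++ a) with hp | hp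
  · obtain ⟨δ, rfl⟩ := hp
    rcases eq_or_ne δ [] with rfl | hδ
    · simp only [List.append_nil] at e1 e2
      exact ⟨[], x, y, by simpa using List.append_cancel_left e1,
        by simpa using List.append_cancel_left e2, hD⟩
    · exfalso
      have hx : x = δ ++ a := by
        apply List.append_cancel_left (as := β); rw [← e1, List.append_assoc]
      have hy : y = δ ++ b := by
        apply List.append_cancel_left (as := β); rw [← e2, List.append_assoc]
      obtain ⟨d, δ', rfl⟩ := List.exists_cons_of_ne_nil hδ
      rcases hD with ⟨hx0, _⟩ | ⟨hy0, _⟩ | ⟨i, j, k, k', hij, hxr, hyr⟩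
      · rw [hx0] at hx; exact absurd hx.symm (by simp)
      · rw [hy0] at hy; exact absurd hy.symm (by simp)
      · rw [hxr] at hx; rw [hyr] at hy
        simp only [List.cons_append, List.cons.injEq] at hx hy
        exact hij (hx.1.trans hy.1.symm)
  · obtain ⟨γ, rfl⟩ := hp
    have hx : γ ++ x = a := by
      apply List.append_cancel_left (as := σ); rw [e1, List.append_assoc]
    have hy : γ ++ y = b := by
      apply List.append_cancel_left (as := σ); rw [e2, List.append_assoc]
    exact ⟨γ, x, y, hx.symm, hy.symm, hD⟩

lemma transition {σ w ρ₂ : Word} (hσ : σ ≠ [])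
    (h : WordAdj (σ ++ w) ρ₂) (hnp : ¬ σ <+: ρ₂) :
    w.toFinset.card ≤ 2 ∧ (σ = lcp ρ₂ σ ∨ WordAdj σ (lcp ρ₂ σ)) := by
  obtain ⟨hne, β, x, y, e1, e2, hD⟩ := h
  have hβσ : β <+: σ := by
    rcases List.prefix_or_prefix_of_prefix (⟨x, e1.symm⟩ : β <+: σ ++ w)
        (⟨w, rfl⟩ : σ <+: σ ++ w) with hp | hp
    · exact hp
    · exact absurd (hp.trans ⟨y, e2.symm⟩) hnp
  obtain ⟨sg, rfl⟩ := hβσ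
  have hsgne : sg ≠ [] := by
    rintro rfl
    exact hnp (by rw [e2]; simpa using (⟨y, rfl⟩ : β <+: β ++ y))
  have hx : x = sg ++ w := by
    apply List.append_cancel_left (as := β); rw [← e1, List.append_assoc]
  have hxcard := (wordAdj_parts hD).1
  constructor
  · exact card_le_two_of_subset (by rw [hx]; exact fun z hz => List.mem_append_right _ hz) hxcard
  · rw [e2, lcp_append]
    have hvp : lcp y sg <+: sg := lcp_prefix_right _ _
    obtain ⟨r, hr⟩ := hvp
    have hrsub : r ⊆ x := by
      intro z hz
      rw [hx]
      exact List.mem_append_left _ (hr ▸ List.mem_append_right _ hz)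
    have := wordAdj_of_prefix (p := β ++ lcp y sg) (q := β ++ sg)
      ⟨r, by rw [List.append_assoc, hr]⟩
      (fun r' hr' => by
        have : r' = r := by
          apply List.append_cancel_left (as := β ++ lcp y sg)
          rw [← hr', List.append_assoc, hr]
        subst this
        exact card_le_two_of_subset hrsub hxcard)
    rcases this with h' | h'
    · exact Or.inl h'.symm
    · exact Or.inr (wordAdj_symm h')

lemma dist_lcp' {T m : ℕ} {σ : Word} (hσ : σ.length ≤ m) :
    ∀ {ρ c : Word} (q : (Gt T).Walk ρ c), c = [] → dW m (lcp ρ σ) [] ≤ q.length := by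
  intro ρ c q
  induction q with
  | nil => rintro rfl; simp [dW, SimpleGraph.dist_self]
  | @cons u v _ h q ih =>
    intro hc
    rcases lcp_lip (σ := σ) (Gt_adj.mp h).2.2 with he | ha
    · rw [he]
      exact le_trans (ih hc) (by simp)
    · have hl1 : (lcp u σ).length ≤ m := le_trans (lcp_prefix_right u σ).length_le hσ
      have hl2 : (lcp v σ).length ≤ m := le_trans (lcp_prefix_right v σ).length_le hσ
      have hstep := dW_le_succ_of_adj (Gt_adj.mpr ⟨hl1, hl2, ha⟩ : (Gt m).Adj _ _) hl2
      have hih := ih hc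
      simp only [SimpleGraph.Walk.length_cons]
      omega

lemma dist_lcp {T m : ℕ} {σ : Word} (hσ : σ.length ≤ m)
    {ρ : Word} (q : (Gt T).Walk ρ []) : dW m (lcp ρ σ) [] ≤ q.length :=
  dist_lcp' hσ q rfl

lemma main_aux' {m n : ℕ} {σ : Word} (hσm : σ.length = m) (hσ : σ ≠ []) :
    ∀ {ρ c : Word} (q : (Gt (m + n)).Walk ρ c), c = [] → σ <+: ρ →
      dW n (ρ.drop m) [] + dW m σ [] ≤ q.length + 1 := by
  intro ρ c q
  induction q with
  | nil => rintro rfl hp; exact absurd (List.prefix_nil.mp hp) hσ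
  | @cons u v _ h q ih =>
    rintro rfl hp
    obtain ⟨a, rfl⟩ := hp
    have hdrop : (σ ++ a).drop m = a := by rw [← hσm]; exact List.drop_left
    by_cases hv : σ <+: v
    · obtain ⟨b, rfl⟩ := hv
      have hcone : (Gt n).Adj a b := cone_adj hσm h
      have hbl : b.length ≤ n := (Gt_adj.mp hcone).2.1
      have hstep : dW n a [] ≤ dW n b [] + 1 := dW_le_succ_of_adj hcone hbl
      have hih := ih rfl ⟨b, rfl⟩
      rw [hdrop]
      rw [(by rw [← hσm]; exact List.drop_left : (σ ++ b).drop m = b)] at hih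
      simp only [SimpleGraph.Walk.length_cons]
      omega
    · have htr := transition hσ (Gt_adj.mp h).2.2 hv
      have hal : a.length ≤ n := by
        have := (Gt_adj.mp h).1; simp [hσm] at this; omega
      have h1 : dW n a [] ≤ 1 := dW_le_one hal htr.1
      have hσl : σ.length ≤ m := le_of_eq hσm
      have h3 : dW m (lcp v σ) [] ≤ q.length := dist_lcp hσl q
      have h2 : dW m σ [] ≤ q.length + 1 := by
        rcases htr.2 with he | ha
        · rw [he]; omega
        · have hl1 : σ.length ≤ m := hσl
          have hl2 : (lcp v σ).length ≤ m := le_trans (lcp_prefix_right v σ).length_le hσl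
          have := dW_le_succ_of_adj (Gt_adj.mpr ⟨hl1, hl2, ha⟩ : (Gt m).Adj _ _) hl2
          omega
      rw [hdrop]
      simp only [SimpleGraph.Walk.length_cons]
      omega

lemma dW_superadd {σ τ : Word} (hσ : σ ≠ []) (hτ : τ ≠ []) :
    dW τ.length τ [] + dW σ.length σ [] ≤ dW (σ.length + τ.length) (σ ++ τ) [] + 1 := by
  obtain ⟨q, hq⟩ := (reachable_nil_s11 (σ := σ ++ τ) (t := σ.length + τ.length)
    (by simp)).exists_walk_length_eq_dist
  have := main_aux' (n := τ.length) rfl hσ q rfl ⟨τ, rfl⟩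
  rw [List.drop_left] at this
  rw [hq] at this
  exact this

lemma Lw_superadd (σ τ : Word) : Lw σ + Lw τ ≤ Lw (σ ++ τ) := by
  rcases eq_or_ne σ [] with rfl | hσ
  · simp [Lw]
  rcases eq_or_ne τ [] with rfl | hτ
  · simp [Lw]
  have hne : σ ++ τ ≠ [] := by simp [hσ]
  have hsup := dW_superadd hσ hτ
  have h1 : 1 ≤ dW σ.length σ [] := dW_pos hσ le_rfl
  have h2 : 1 ≤ dW τ.length τ [] := dW_pos hτ le_rfl
  simp only [Lw, if_neg hσ, if_neg hτ, if_neg hne, List.length_append]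
  omega

end Graph

section Avg

/-- total sum of `L` over words of length `m` -/
noncomputable def Asum (m : ℕ) : ℝ := ∑ v : Fin m → Letter, (Lw (List.ofFn v) : ℝ)

lemma alphaBar_eq (m : ℕ) : alphaBar m = Asum m / 3 ^ m := rfl

lemma card_letterfun (m : ℕ) : (Fintype.card (Fin m → Letter) : ℝ) = 3 ^ m := by
  simp [Fintype.card_fun]

lemma Asum_nonneg (m : ℕ) : 0 ≤ Asum m :=
  Finset.sum_nonneg fun _ _ => Nat.cast_nonneg _

lemma Lw_le (σ : Word) : (Lw σ : ℝ) ≤ σ.length := by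
  have : Lw σ ≤ σ.length := by
    rcases eq_or_ne σ [] with rfl | h
    · simp [Lw]
    · simp only [Lw, if_neg h]
      have := dW_le_length (σ := σ) (t := σ.length) le_rfl
      omega
  exact_mod_cast this

lemma Asum_le (m : ℕ) : Asum m ≤ m * 3 ^ m := by
  calc Asum m ≤ ∑ _v : Fin m → Letter, (m : ℝ) :=
        Finset.sum_le_sum fun v _ => by simpa using Lw_le (List.ofFn v)
    _ = m * 3 ^ m := by
        rw [Finset.sum_const, nsmul_eq_mul, Finset.card_univ, card_letterfun]; ring

lemma Asum_superadd (m n : ℕ) :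
    3 ^ n * Asum m + 3 ^ m * Asum n ≤ Asum (m + n) := by
  have h1 : Asum (m + n) =
      ∑ p : (Fin m → Letter) × (Fin n → Letter),
        (Lw (List.ofFn p.1 ++ List.ofFn p.2) : ℝ) := by
    rw [Asum, ← Equiv.sum_comp (Fin.appendEquiv m n)]
    apply Finset.sum_congr rfl
    intro p _
    rw [show ((Fin.appendEquiv m n) p : Fin (m + n) → Letter) = Fin.append p.1 p.2 from rfl,
      List.ofFn_fin_append]
  rw [h1, Fintype.sum_prod_type]
  have h2 : ∀ (v : Fin m → Letter) (w : Fin n → Letter),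
      (Lw (List.ofFn v) : ℝ) + (Lw (List.ofFn w) : ℝ) ≤
        (Lw (List.ofFn v ++ List.ofFn w) : ℝ) := by
    intro v w
    exact_mod_cast Lw_superadd (List.ofFn v) (List.ofFn w)
  have step : ∀ v : Fin m → Letter,
      3 ^ n * (Lw (List.ofFn v) : ℝ) + Asum n ≤
        ∑ w : Fin n → Letter, (Lw (List.ofFn v ++ List.ofFn w) : ℝ) := by
    intro v
    have he : 3 ^ n * (Lw (List.ofFn v) : ℝ) + Asum n
        = ∑ w : Fin n → Letter, ((Lw (List.ofFn v) : ℝ) + (Lw (List.ofFn w) : ℝ)) := by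
      rw [Finset.sum_add_distrib, Finset.sum_const, nsmul_eq_mul, Finset.card_univ,
        card_letterfun, Asum]
    rw [he]
    exact Finset.sum_le_sum fun w _ => h2 v w
  calc (3:ℝ) ^ n * Asum m + 3 ^ m * Asum n
      = ∑ v : Fin m → Letter, (3 ^ n * (Lw (List.ofFn v) : ℝ) + Asum n) := by
        rw [Finset.sum_add_distrib, ← Finset.mul_sum, Finset.sum_const, nsmul_eq_mul,
          Finset.card_univ, card_letterfun, Asum]
    _ ≤ _ := Finset.sum_le_sum fun v _ => step v

lemma alphaBar_superadd (m n : ℕ) : alphaBar m + alphaBar n ≤ alphaBar (m + n) := by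
  have h := Asum_superadd m n
  have h3m : (0:ℝ) < 3 ^ m := by positivity
  have h3n : (0:ℝ) < 3 ^ n := by positivity
  rw [mul_comm ((3:ℝ) ^ n) (Asum m)] at h
  rw [alphaBar_eq, alphaBar_eq, alphaBar_eq,
    div_add_div _ _ (ne_of_gt h3m) (ne_of_gt h3n), pow_add,
    div_le_div_iff₀ (by positivity) (by positivity)]
  exact mul_le_mul_of_nonneg_right (by linarith) (by positivity)

lemma alphaBar_one : alphaBar 1 = 0 := by
  have key : ∀ v : Fin 1 → Letter, Lw (List.ofFn v) = 0 := by
    intro v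
    have hne : List.ofFn v ≠ [] := fun h => by simpa using congrArg List.length h
    have hd := dW_le_length (σ := List.ofFn v) (t := (List.ofFn v).length) le_rfl
    rw [Lw, if_neg hne]
    rw [List.length_ofFn] at hd ⊢
    omega
  rw [alphaBar, Finset.sum_eq_zero (fun v _ => by rw [key v, Nat.cast_zero])]
  simp

lemma alphaBar_div_le_one {m : ℕ} (hm : 1 ≤ m) : alphaBar m / m ≤ 1 := by
  have h3m : (0:ℝ) < 3 ^ m := by positivity
  have hm' : (0:ℝ) < m := by exact_mod_cast hm
  rw [alphaBar_eq, div_le_one hm', div_le_iff₀ h3m]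
  exact Asum_le m

lemma alphaSet_nonempty : {x : ℝ | ∃ m : ℕ, 1 ≤ m ∧ x = alphaBar m / m}.Nonempty :=
  ⟨alphaBar 1, 1, le_rfl, by norm_num⟩

lemma alphaSet_bdd : BddAbove {x : ℝ | ∃ m : ℕ, 1 ≤ m ∧ x = alphaBar m / m} := by
  refine ⟨1, fun x hx => ?_⟩
  obtain ⟨m, hm, rfl⟩ := hx
  exact alphaBar_div_le_one hm

lemma alphaBar_div_le_alphaStar {m : ℕ} (hm : 1 ≤ m) : alphaBar m / m ≤ alphaStar :=
  le_csSup alphaSet_bdd ⟨m, hm, rfl⟩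

lemma alphaStar_nonneg : 0 ≤ alphaStar := by
  have := alphaBar_div_le_alphaStar (le_refl 1)
  rwa [alphaBar_one, Nat.cast_one, zero_div] at this

lemma alphaBar_le {m : ℕ} (hm : 1 ≤ m) : alphaBar m ≤ alphaStar * m := by
  have hm' : (0:ℝ) < m := by exact_mod_cast hm
  have := alphaBar_div_le_alphaStar hm
  calc alphaBar m = alphaBar m / m * m := by field_simp
    _ ≤ alphaStar * m := by
        apply mul_le_mul_of_nonneg_right this (le_of_lt hm')

lemma tendsto_alphaBar : Tendsto (fun n : ℕ => alphaBar n / n) atTop (nhds alphaStar) := by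
  have hsub : Subadditive (fun n => -alphaBar n) := by
    intro m n
    have := alphaBar_superadd m n
    simp only
    linarith
  have hbdd : BddBelow (Set.range fun n : ℕ => -alphaBar n / n) := by
    refine ⟨-1, fun x hx => ?_⟩
    obtain ⟨n, rfl⟩ := hx
    rcases Nat.eq_zero_or_pos n with rfl | hn
    · norm_num
    · have hle := alphaBar_div_le_one hn
      show -1 ≤ -alphaBar n / ↑n
      rw [neg_div]
      linarith
  have htd := hsub.tendsto_lim hbdd
  have hlim : hsub.lim = -alphaStar := by
    have : -hsub.lim = alphaStar := by
      rw [Subadditive.lim, Real.sInf_def, neg_neg]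
      congr 1
      ext x
      simp only [Set.mem_neg, Set.mem_image, Set.mem_Ici, Set.mem_setOf_eq]
      constructor
      · rintro ⟨n, hn, he⟩
        refine ⟨n, hn, ?_⟩
        rw [neg_div] at he
        linarith
      · rintro ⟨n, hn, he⟩
        refine ⟨n, hn, ?_⟩
        rw [neg_div, he]
    linarith
  rw [hlim] at htd
  have h2 := htd.neg
  simp only [neg_neg] at h2
  refine h2.congr fun n => ?_
  rw [neg_div, neg_neg]

end Avg

section Kappa

lemma kappa_eq (t : ℕ) : kappa t = (∑ k ∈ range (t + 1), Asum k) / Nv t := rfl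

lemma sum_pow3 (t : ℕ) : ∑ k ∈ range (t + 1), (3:ℝ) ^ k = Nv t := by
  rw [geom_sum_eq (by norm_num : (3:ℝ) ≠ 1), Nv]
  norm_num

lemma Nv_pos (t : ℕ) : 0 < Nv t := by
  have h3 : (3:ℝ) ≤ 3 ^ (t + 1) := by
    calc (3:ℝ) = 3 ^ 1 := by norm_num
      _ ≤ 3 ^ (t + 1) := pow_le_pow_right₀ (by norm_num) (by omega)
  rw [Nv]; linarith

lemma pow3_le_Nv (t : ℕ) : (3:ℝ) ^ t ≤ Nv t := by
  have h1 : (1:ℝ) ≤ 3 ^ t := one_le_pow₀ (by norm_num)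
  rw [Nv, pow_succ]
  linarith

lemma Asum_zero : Asum 0 = 0 := by
  rw [Asum]
  rw [Finset.sum_eq_zero]
  intro v _
  simp [Lw]

lemma Asum_eq (k : ℕ) : Asum k = alphaBar k * 3 ^ k := by
  rw [alphaBar_eq]
  field_simp

lemma sum_k3 (t : ℕ) :
    ∑ k ∈ range (t + 1), (k : ℝ) * 3 ^ k = 3 / 4 * ((2 * t - 1) * 3 ^ t + 1) := by
  induction t with
  | zero => norm_num
  | succ t ih =>
    rw [Finset.sum_range_succ, ih]
    push_cast
    ring

lemma kappa_le' (t : ℕ) (ht : 1 ≤ t) : kappa t ≤ alphaStar * t := by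
  have hNv := Nv_pos t
  rw [kappa_eq, div_le_iff₀ hNv]
  have hbound : ∀ k ∈ range (t + 1), Asum k ≤ alphaStar * t * 3 ^ k := by
    intro k hk
    have hkt : k ≤ t := by simp at hk; omega
    rcases Nat.eq_zero_or_pos k with rfl | hk1
    · rw [Asum_zero]
      have : (0:ℝ) ≤ alphaStar * t := mul_nonneg alphaStar_nonneg (by positivity)
      positivity
    · rw [Asum_eq]
      have h1 : alphaBar k ≤ alphaStar * k := alphaBar_le hk1
      have h2 : alphaStar * k ≤ alphaStar * t :=
        mul_le_mul_of_nonneg_left (by exact_mod_cast hkt) alphaStar_nonneg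
      have h3 : (0:ℝ) ≤ 3 ^ k := by positivity
      nlinarith
  calc ∑ k ∈ range (t + 1), Asum k ≤ ∑ k ∈ range (t + 1), alphaStar * t * 3 ^ k :=
        Finset.sum_le_sum hbound
    _ = alphaStar * t * Nv t := by rw [← Finset.mul_sum, sum_pow3]
    _ = alphaStar * ↑t * Nv t := rfl

lemma kappa_nonneg (t : ℕ) : 0 ≤ kappa t := by
  rw [kappa_eq]
  exact div_nonneg (Finset.sum_nonneg fun k _ => Asum_nonneg k) (Nv_pos t).le

theorem kappa_le_and_tendsto' :
    (∀ t : ℕ, 1 ≤ t → kappa t ≤ alphaStar * t) ∧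
    Tendsto (fun t : ℕ => kappa t / t) atTop (nhds alphaStar) := by
  refine ⟨kappa_le', ?_⟩
  rw [Metric.tendsto_atTop]
  intro ε hε
  obtain ⟨M₀, hM₀⟩ := Metric.tendsto_atTop.mp tendsto_alphaBar (ε / 2) (by linarith)
  set M := max M₀ 1 with hMdef
  set γ := alphaStar - ε / 2 with hγdef
  have hαn : ∀ n : ℕ, M ≤ n → γ * n ≤ alphaBar n := by
    intro n hn
    have h1 := hM₀ n (le_trans (le_max_left _ _) hn)
    rw [Real.dist_eq, abs_lt] at h1
    have hn1 : 1 ≤ n := le_trans (le_max_right _ _) hn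
    have hnp : (0:ℝ) < n := by exact_mod_cast hn1
    have h2 : γ ≤ alphaBar n / n := by rw [hγdef]; linarith [h1.1]
    calc γ * n ≤ alphaBar n / n * n := mul_le_mul_of_nonneg_right h2 hnp.le
      _ = alphaBar n := by field_simp
  set C : ℝ := ∑ k ∈ range M, (k : ℝ) * 3 ^ k with hCdef
  obtain ⟨N₁, hN₁⟩ := exists_nat_gt (max (4 * γ / ε) C)
  clear_value M γ C
  refine ⟨max (max M N₁) 1, fun t ht => ?_⟩
  have htM : M ≤ t := le_trans (le_trans (le_max_left _ _) (le_max_left _ _)) ht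
  have htN₁ : N₁ ≤ t := le_trans (le_trans (le_max_right _ _) (le_max_left _ _)) ht
  have ht1 : 1 ≤ t := le_trans (le_max_right _ _) ht
  have htp : (0:ℝ) < t := by exact_mod_cast ht1
  have hNv := Nv_pos t
  -- upper bound
  have hup : kappa t / t ≤ alphaStar := by
    rw [div_le_iff₀ htp]
    calc kappa t ≤ alphaStar * t := kappa_le' t ht1
      _ = alphaStar * t := rfl
  -- lower bound
  have hlow : alphaStar - ε < kappa t / t := by
    rcases le_or_gt 0 γ with hγ0 | hγ0
    · -- main case
      have hNt : (N₁ : ℝ) ≤ t := by exact_mod_cast htN₁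
      have htC : C ≤ 3 ^ t := by
        have h1 : C < N₁ := lt_of_le_of_lt (le_max_right _ _) hN₁
        have h2 : (t:ℝ) ≤ 3 ^ t := by
          exact_mod_cast (Nat.lt_pow_self (n := t) (by norm_num : 1 < 3)).le
        linarith
      have hx1 : (1:ℝ) ≤ 3 ^ t := one_le_pow₀ (by norm_num)
      -- split the weighted sum
      have hsplit : ∑ k ∈ range (t + 1), (k : ℝ) * 3 ^ k
          = C + ∑ k ∈ Finset.Ico M (t + 1), (k : ℝ) * 3 ^ k := by
        rw [hCdef]
        simp only [Finset.range_eq_Ico]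
        exact (Finset.sum_Ico_consecutive _ (Nat.zero_le M) (by omega : M ≤ t + 1)).symm
      have hnum1 : ∑ k ∈ Finset.Ico M (t + 1), γ * ((k : ℝ) * 3 ^ k)
          ≤ ∑ k ∈ Finset.Ico M (t + 1), Asum k := by
        apply Finset.sum_le_sum
        intro k hk
        have hkM : M ≤ k := (Finset.mem_Ico.mp hk).1
        have := hαn k hkM
        rw [Asum_eq]
        have h3 : (0:ℝ) ≤ 3 ^ k := by positivity
        nlinarith
      have hnum2 : ∑ k ∈ Finset.Ico M (t + 1), Asum k ≤ ∑ k ∈ range (t + 1), Asum k := by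
        apply Finset.sum_le_sum_of_subset_of_nonneg
        · rw [Finset.range_eq_Ico]; exact Finset.Ico_subset_Ico (Nat.zero_le _) le_rfl
        · intro k _ _; exact Asum_nonneg k
      have hIco : ∑ k ∈ Finset.Ico M (t + 1), γ * ((k : ℝ) * 3 ^ k)
          = γ * (∑ k ∈ range (t + 1), (k : ℝ) * 3 ^ k - C) := by
        rw [hsplit, ← Finset.mul_sum]
        ring
      -- Sm bound
      have hSm : (t : ℝ) * Nv t - ∑ k ∈ range (t + 1), (k : ℝ) * 3 ^ k ≤ 3 ^ t := by
        rw [sum_k3, Nv, pow_succ]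
        have htr : (0:ℝ) ≤ t := htp.le
        nlinarith
      -- products
      have p1 : γ * ((t : ℝ) * Nv t - ∑ k ∈ range (t + 1), (k : ℝ) * 3 ^ k) ≤ γ * 3 ^ t :=
        mul_le_mul_of_nonneg_left hSm hγ0
      have p2 : γ * C ≤ γ * 3 ^ t := mul_le_mul_of_nonneg_left htC hγ0
      have p3 : γ * 3 ^ t ≤ γ * Nv t := mul_le_mul_of_nonneg_left (pow3_le_Nv t) hγ0
      have hnum : (γ * t - 2 * γ) * Nv t ≤ ∑ k ∈ range (t + 1), Asum k := by
        have h0 := le_trans (le_of_eq hIco.symm) (le_trans hnum1 hnum2)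
        nlinarith
      have hk1 : γ * t - 2 * γ ≤ kappa t := by
        rw [kappa_eq, le_div_iff₀ hNv]
        exact hnum
      have hk2 : γ - 2 * γ / t ≤ kappa t / t := by
        have h7 : (γ * ↑t - 2 * γ) / ↑t = γ - 2 * γ / ↑t := by
          rw [sub_div, mul_div_assoc, div_self htp.ne', mul_one]
        calc γ - 2 * γ / ↑t = (γ * ↑t - 2 * γ) / ↑t := h7.symm
          _ ≤ kappa t / ↑t := by gcongr
      have hfrac : 2 * γ / t < ε / 2 := by
        have h4 : 4 * γ / ε < N₁ := lt_of_le_of_lt (le_max_left _ _) hN₁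
        have h5 : 4 * γ / ε < t := lt_of_lt_of_le h4 hNt
        rw [div_lt_iff₀ hε] at h5
        rw [div_lt_iff₀ htp]
        have hcomm : (↑t:ℝ) * ε = ε * ↑t := mul_comm _ _
        linarith
      calc alphaStar - ε = γ - ε / 2 := by rw [hγdef]; ring
        _ < kappa t / ↑t := by linarith
    · -- γ < 0
      have h0 : 0 ≤ kappa t / t := div_nonneg (kappa_nonneg t) htp.le
      rw [hγdef] at hγ0
      linarith
  rw [Real.dist_eq, abs_lt]
  constructor <;> linarith

end Kappa

/-- For every `t ≥ 1`, `κ_t ≤ α*·t`, and `lim_{t→∞} κ_t/t = α*`. -/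
theorem kappa_le_and_tendsto :
    (∀ t : ℕ, 1 ≤ t → kappa t ≤ alphaStar * t) ∧
    Tendsto (fun t : ℕ => kappa t / t) atTop (nhds alphaStar) := by
  exact kappa_le_and_tendsto'
end
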